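/- arXiv:1303.4102 — 6 statements merged into one kernel-verified Lean document; each statement's English description precedes it below -/
import Mathlib

section
/- For every integer r ≥ 1 and either choice of sign, (S^±)^r = q^{± r(r−1)/2} [r]! Σ_{1 ≤ i₁ < i₂ < ⋯ < i_r ≤ n} S^±_{i₁} S^±_{i₂} ⋯ S^±_{i_r} as endomorphisms of V = (ℂ²)^{⊗n} (when r > n the sum is empty and both sides vanish). -/
open Matrix Filter Topology BigOperators Finset

noncomputable section

/-- Spin configurations: basis labels of `(ℂ²)^{⊗n}`; `0` is `+`, `1` is `−`. -/
abbrev Spins (n : ℕ) := Fin n → Fin 2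

/-- σ⁺ = [[0,1],[0,0]] -/
def sigmaP : Matrix (Fin 2) (Fin 2) ℂ := fun a b => if a = 0 ∧ b = 1 then 1 else 0

/-- σ⁻ = [[0,0],[1,0]] -/
def sigmaM : Matrix (Fin 2) (Fin 2) ℂ := fun a b => if a = 1 ∧ b = 0 then 1 else 0

/-- diagonal entry of K = diag(v, v⁻¹) -/
def Kdiag (v : ℂ) (a : Fin 2) : ℂ := if a = 0 then v else v⁻¹

/-- `S_i^A = K^{⊗(i−1)} ⊗ A ⊗ (K⁻¹)^{⊗(n−i)}` as a matrix on `(ℂ²)^{⊗n}`. -/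
def siteOp (n : ℕ) (v : ℂ) (A : Matrix (Fin 2) (Fin 2) ℂ) (i : Fin n) :
    Matrix (Spins n) (Spins n) ℂ :=
  fun x y => ∏ k : Fin n,
    if k < i then (if x k = y k then Kdiag v (x k) else 0)
    else if k = i then A (x k) (y k)
    else (if x k = y k then Kdiag v⁻¹ (x k) else 0)

/-- `S^+ = Σ_i S_i^+`. -/
def SpOp (n : ℕ) (v : ℂ) : Matrix (Spins n) (Spins n) ℂ := ∑ i : Fin n, siteOp n v sigmaP i

/-- `S^- = Σ_i S_i^-`. -/
def SmOp (n : ℕ) (v : ℂ) : Matrix (Spins n) (Spins n) ℂ := ∑ i : Fin n, siteOp n v sigmaM i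

/-- `Σ^z = Σ_i 1 ⊗ ⋯ ⊗ σ^z ⊗ ⋯ ⊗ 1` (diagonal). -/
def SzOp (n : ℕ) : Matrix (Spins n) (Spins n) ℂ :=
  fun x y => if x = y then ∑ k : Fin n, (if x k = 0 then (1 : ℂ) else -1) else 0

/-- symmetric q-number `[k] = (q^k − q^{−k})/(q − q⁻¹)`. -/
def qNum (q : ℂ) (k : ℤ) : ℂ := (q ^ k - q ^ (-k)) / (q - q⁻¹)

/-- q-factorial `[k]! = [k][k−1]⋯[1]`, `[0]! = 1`. -/
def qFact (q : ℂ) : ℕ → ℂ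
  | 0 => 1
  | k + 1 => qNum q (k + 1) * qFact q k

/-- q-binomial `[k choose l]`, zero unless `0 ≤ l ≤ k`. -/
def qBinom (q : ℂ) (k l : ℤ) : ℂ :=
  if 0 ≤ l ∧ l ≤ k then qFact q k.toNat / (qFact q l.toNat * qFact q (k - l).toNat) else 0

/-- `q` is generic: nonzero and not a root of unity. -/
def Generic (q : ℂ) : Prop := q ≠ 0 ∧ ∀ k : ℕ, 0 < k → q ^ k ≠ 1

def GenericSet : Set ℂ := {q | Generic q}

/-- the root of unity `q` is associated with `p`: `p ≥ 2` is minimal with `q^{2p} = 1`. -/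
def AssocRootOfUnity (q : ℂ) (p : ℕ) : Prop :=
  2 ≤ p ∧ q ^ (2 * p) = 1 ∧ ∀ k : ℕ, 0 < k → k < p → q ^ (2 * k) ≠ 1

/-- the coefficient `a_{i,j,m}` of the paper, with `k = j − m` and `s = j + m`:
`a = (−1)^{i+k} [i choose k] [i+s+1 choose i+1]⁻¹ [k+s+1] / [i+1]`. -/
def aCoeff (q : ℂ) (i k s : ℤ) : ℂ :=
  (-1 : ℂ) ^ (i + k) * qBinom q i k * (qBinom q (i + s + 1) (i + 1))⁻¹ *
    qNum q (k + s + 1) / qNum q (i + 1)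

/-- `S_r = (S^−)^r (S^+)^r / ([r]!)²` with `q = v²`. -/
def SOp (n : ℕ) (v : ℂ) (r : ℕ) : Matrix (Spins n) (Spins n) ℂ :=
  ((qFact (v ^ 2) r) ^ 2)⁻¹ • (SmOp n v ^ r * SpOp n v ^ r)

/-- a function of `q` is regular at `q_c` if it has a finite limit as `q → q_c`
through generic values of `q`. -/
def RegularAt (f : ℂ → ℂ) (qc : ℂ) : Prop :=
  ∃ L : ℂ, Tendsto f (𝓝[GenericSet] qc) (𝓝 L)


/-- the ordered product `S^A_{i₁} S^A_{i₂} ⋯ S^A_{i_r}` over the elements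
`i₁ < i₂ < ⋯ < i_r` of a finite set of sites. -/
def orderedProd (n : ℕ) (v : ℂ) (A : Matrix (Fin 2) (Fin 2) ℂ) (s : Finset (Fin n)) :
    Matrix (Spins n) (Spins n) ℂ :=
  ((s.sort (· ≤ ·)).map (fun i => siteOp n v A i)).prod

def dK (v : ℂ) : Matrix (Fin 2) (Fin 2) ℂ := Matrix.diagonal (Kdiag v)

def locM (n : ℕ) (v : ℂ) (A : Matrix (Fin 2) (Fin 2) ℂ) (i k : Fin n) :
    Matrix (Fin 2) (Fin 2) ℂ :=
  if k < i then dK v else if k = i then A else dK v⁻¹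

def tensorMat (n : ℕ) (m : Fin n → Matrix (Fin 2) (Fin 2) ℂ) :
    Matrix (Spins n) (Spins n) ℂ :=
  fun x y => ∏ k, m k (x k) (y k)

lemma siteOp_eq (n : ℕ) (v : ℂ) (A : Matrix (Fin 2) (Fin 2) ℂ) (i : Fin n) :
    siteOp n v A i = tensorMat n (locM n v A i) := by
  funext x y
  unfold siteOp tensorMat locM
  refine Finset.prod_congr rfl fun k _ => ?_
  split_ifs <;> simp_all [dK, Matrix.diagonal_apply]

lemma tensorMat_mul (n : ℕ) (m m' : Fin n → Matrix (Fin 2) (Fin 2) ℂ) :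
    tensorMat n m * tensorMat n m' = tensorMat n (fun k => m k * m' k) := by
  funext x y
  simp only [Matrix.mul_apply, tensorMat]
  symm
  rw [Finset.prod_univ_sum]
  simp [Fintype.piFinset_univ, Finset.prod_mul_distrib]

lemma tensorMat_smul_congr (n : ℕ) (m m' : Fin n → Matrix (Fin 2) (Fin 2) ℂ)
    (c : Fin n → ℂ) (h : ∀ k, m k = c k • m' k) :
    tensorMat n m = (∏ k, c k) • tensorMat n m' := by
  funext x y
  simp only [tensorMat, Matrix.smul_apply, smul_eq_mul]
  rw [← Finset.prod_mul_distrib]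
  exact Finset.prod_congr rfl fun k _ => by rw [h k]; rfl

lemma tensorMat_eq_zero (n : ℕ) (m : Fin n → Matrix (Fin 2) (Fin 2) ℂ) (i : Fin n)
    (h : m i = 0) : tensorMat n m = 0 := by
  funext x y
  exact Finset.prod_eq_zero (Finset.mem_univ i) (by rw [h]; rfl)

lemma dK_comm (a b : ℂ) : dK a * dK b = dK b * dK a := by
  simp [dK, Matrix.diagonal_mul_diagonal, mul_comm]

section comm
variable {n : ℕ} {v : ℂ} {A : Matrix (Fin 2) (Fin 2) ℂ} {w : ℂ}

lemma locM_comm (hA1 : dK v * A = w • (A * dK v)) (hA2 : A * dK v⁻¹ = w • (dK v⁻¹ * A))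
    {i j : Fin n} (hij : i < j) (k : Fin n) :
    locM n v A j k * locM n v A i k
      = (if k = i ∨ k = j then w else 1) • (locM n v A i k * locM n v A j k) := by
  unfold locM
  by_cases hki : k = i
  · subst hki
    rw [if_pos hij, if_neg (lt_irrefl k), if_pos rfl, if_pos (Or.inl rfl)]
    exact hA1
  · by_cases hkj : k = j
    · subst hkj
      have h1 : ¬ k < i := fun h => absurd (h.trans hij) (lt_irrefl k)
      rw [if_neg (lt_irrefl k), if_pos rfl, if_neg h1, if_neg hki, if_pos (Or.inr rfl)]
      exact hA2
    · have hsc : ¬(k = i ∨ k = j) := by push_neg; exact ⟨hki, hkj⟩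
      rw [if_neg hsc, one_smul, if_neg hki, if_neg hkj]
      by_cases h1 : k < i
      · rw [if_pos h1, if_pos (h1.trans hij)]
      · rw [if_neg h1]
        by_cases h2 : k < j
        · rw [if_pos h2]
          exact dK_comm _ _
        · rw [if_neg h2]

lemma siteOp_comm (hA1 : dK v * A = w • (A * dK v)) (hA2 : A * dK v⁻¹ = w • (dK v⁻¹ * A))
    {i j : Fin n} (hij : i < j) :
    siteOp n v A j * siteOp n v A i = (w * w) • (siteOp n v A i * siteOp n v A j) := by
  rw [siteOp_eq, siteOp_eq, tensorMat_mul, tensorMat_mul,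
    tensorMat_smul_congr n _ _ (fun k => if k = i ∨ k = j then w else 1)
      (locM_comm hA1 hA2 hij)]
  congr 1
  have : ∀ k : Fin n, (if k = i ∨ k = j then w else 1)
      = (if k ∈ ({i, j} : Finset (Fin n)) then w else 1) := by
    intro k; simp [Finset.mem_insert]
  simp only [this]
  rw [Finset.prod_ite_mem, Finset.univ_inter, Finset.prod_const,
    Finset.card_pair (ne_of_lt hij), sq]

lemma siteOp_sq (hA0 : A * A = 0) (i : Fin n) :
    siteOp n v A i * siteOp n v A i = 0 := by
  rw [siteOp_eq, tensorMat_mul]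
  apply tensorMat_eq_zero n _ i
  simp [locM, hA0]

end comm

lemma orderedProd_empty (n : ℕ) (v : ℂ) (A : Matrix (Fin 2) (Fin 2) ℂ) :
    orderedProd n v A ∅ = 1 := by
  simp [orderedProd]

lemma orderedProd_insert (n : ℕ) (v : ℂ) (A : Matrix (Fin 2) (Fin 2) ℂ)
    {a : Fin n} {s : Finset (Fin n)} (h : ∀ b ∈ s, a < b) :
    orderedProd n v A (insert a s) = siteOp n v A a * orderedProd n v A s := by
  have ha : a ∉ s := fun hm => lt_irrefl a (h a hm)
  unfold orderedProd
  rw [Finset.sort_insert (· ≤ ·) (fun b hb => le_of_lt (h b hb)) ha, List.map_cons,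
    List.prod_cons]

section key
variable {n : ℕ} {v : ℂ} {A : Matrix (Fin 2) (Fin 2) ℂ} {w : ℂ}

lemma siteOp_mul_orderedProd (hA0 : A * A = 0) (hA1 : dK v * A = w • (A * dK v))
    (hA2 : A * dK v⁻¹ = w • (dK v⁻¹ * A)) (i : Fin n) (s : Finset (Fin n)) :
    siteOp n v A i * orderedProd n v A s =
      if i ∈ s then 0
      else ((w * w) ^ (s.filter (· < i)).card) • orderedProd n v A (insert i s) := by
  induction s using Finset.induction_on_min with
  | empty =>
      simp only [Finset.notMem_empty, if_neg (not_false), Finset.filter_empty,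
        Finset.card_empty, pow_zero, one_smul, orderedProd_empty, mul_one]
      rw [orderedProd_insert n v A (fun b hb => absurd hb (Finset.notMem_empty b)),
        orderedProd_empty, mul_one]
  | insert a t hat ih =>
      have hanott : a ∉ t := fun hm => lt_irrefl a (hat a hm)
      rw [orderedProd_insert n v A hat]
      rcases lt_trichotomy i a with hia | hia | hia
      · -- i < a : i is smaller than everything
        have hinotmem : i ∉ insert a t := by
          simp only [Finset.mem_insert]
          push_neg
          exact ⟨ne_of_lt hia, fun hm => absurd (hia.trans (hat i hm)) (lt_irrefl i)⟩
        have hfe : (insert a t).filter (· < i) = ∅ := by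
          apply Finset.filter_false_of_mem
          intro b hb
          rcases Finset.mem_insert.mp hb with rfl | hb
          · exact fun h => absurd (h.trans hia) (lt_irrefl b)
          · exact fun h => absurd (h.trans hia) (fun hh => absurd (hat b hb) (asymm hh))
        rw [if_neg hinotmem, hfe, Finset.card_empty, pow_zero, one_smul,
          orderedProd_insert n v A (fun b hb => by
            rcases Finset.mem_insert.mp hb with rfl | hb
            · exact hia
            · exact hia.trans (hat b hb)),
          orderedProd_insert n v A hat]
      · -- i = a
        subst hia
        rw [if_pos (Finset.mem_insert_self i t), ← mul_assoc, siteOp_sq hA0, zero_mul]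
      · -- a < i
        rw [← mul_assoc, siteOp_comm hA1 hA2 hia, smul_mul_assoc, mul_assoc, ih]
        by_cases hit : i ∈ t
        · rw [if_pos hit, if_pos (Finset.mem_insert_of_mem hit), mul_zero, smul_zero]
        · have hine : i ∉ insert a t := by
            simp only [Finset.mem_insert]
            push_neg
            exact ⟨ne_of_gt hia, hit⟩
          rw [if_neg hit, if_neg hine]
          have hcard : ((insert a t).filter (· < i)).card = (t.filter (· < i)).card + 1 := by
            rw [Finset.filter_insert, if_pos hia, Finset.card_insert_of_notMem
              (fun hm => hanott (Finset.mem_of_mem_filter a hm))]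
          have hset : insert a (insert i t) = insert i (insert a t) := Finset.insert_comm a i t
          rw [mul_smul_comm, smul_smul, hcard, ← orderedProd_insert n v A (fun b hb => by
              rcases Finset.mem_insert.mp hb with rfl | hb
              · exact hia
              · exact hat b hb), hset]
          ring_nf
end key

lemma reindex_insert {M : Type*} [AddCommMonoid M] {α : Type*} [Fintype α] [DecidableEq α]
    (r : ℕ) (f : Finset α → α → M) :
    ∑ s ∈ Finset.powersetCard r (Finset.univ : Finset α), ∑ i ∈ sᶜ, f (insert i s) i
      = ∑ t ∈ Finset.powersetCard (r + 1) (Finset.univ : Finset α), ∑ i ∈ t, f t i := by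
  rw [Finset.sum_sigma', Finset.sum_sigma']
  apply Finset.sum_nbij' (i := fun p => (⟨insert p.2 p.1, p.2⟩ : Σ _ : Finset α, α))
    (j := fun p => (⟨p.1.erase p.2, p.2⟩ : Σ _ : Finset α, α))
  · rintro ⟨s, i⟩ hp
    rw [Finset.mem_sigma] at hp ⊢
    obtain ⟨hs, hi⟩ := hp
    rw [Finset.mem_powersetCard_univ] at hs ⊢
    rw [Finset.mem_compl] at hi
    exact ⟨by rw [Finset.card_insert_of_notMem hi, hs], Finset.mem_insert_self _ _⟩
  · rintro ⟨t, i⟩ hp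
    rw [Finset.mem_sigma] at hp ⊢
    obtain ⟨ht, hi⟩ := hp
    rw [Finset.mem_powersetCard_univ] at ht ⊢
    refine ⟨by rw [Finset.card_erase_of_mem hi, ht]; rfl, ?_⟩
    rw [Finset.mem_compl]
    exact Finset.notMem_erase i t
  · rintro ⟨s, i⟩ hp
    rw [Finset.mem_sigma] at hp
    have hi := Finset.mem_compl.mp hp.2
    simp [Finset.erase_insert hi]
  · rintro ⟨t, i⟩ hp
    rw [Finset.mem_sigma] at hp
    simp [Finset.insert_erase hp.2]
  · rintro ⟨s, i⟩ _
    rfl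

lemma rank_sum {α : Type*} [LinearOrder α] (x : ℂ) (t : Finset α) :
    ∑ i ∈ t, x ^ (t.filter (· < i)).card = ∑ m ∈ Finset.range t.card, x ^ m := by
  classical
  induction t using Finset.induction_on_max with
  | empty => simp
  | insert a t hat ih =>
      have hanott : a ∉ t := fun hm => lt_irrefl a (hat a hm)
      have h1 : (insert a t).filter (· < a) = t := by
        ext b
        simp only [Finset.mem_filter, Finset.mem_insert]
        constructor
        · rintro ⟨rfl | hb, hba⟩
          · exact absurd hba (lt_irrefl b)
          · exact hb
        · exact fun hb => ⟨Or.inr hb, hat b hb⟩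
      have h2 : ∀ i ∈ t, ((insert a t).filter (· < i)) = t.filter (· < i) := by
        intro i hi
        rw [Finset.filter_insert, if_neg (fun h => absurd (hat i hi) (asymm h))]
      rw [Finset.sum_insert hanott, h1, Finset.card_insert_of_notMem hanott,
        Finset.sum_range_succ, Finset.sum_congr rfl (fun i hi => by rw [h2 i hi]), ih,
        add_comm]

def auxF (w : ℂ) : ℕ → ℂ
  | 0 => 1
  | r + 1 => (∑ m ∈ Finset.range (r + 1), (w * w) ^ m) * auxF w r

section master
variable {n : ℕ} {v : ℂ} {A : Matrix (Fin 2) (Fin 2) ℂ} {w : ℂ}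

lemma master (hA0 : A * A = 0) (hA1 : dK v * A = w • (A * dK v))
    (hA2 : A * dK v⁻¹ = w • (dK v⁻¹ * A)) (r : ℕ) :
    (∑ i : Fin n, siteOp n v A i) ^ r
      = auxF w r • ∑ s ∈ Finset.powersetCard r (Finset.univ : Finset (Fin n)),
          orderedProd n v A s := by
  induction r with
  | zero => simp [auxF, orderedProd_empty]
  | succ r ih =>
      rw [pow_succ', ih, mul_smul_comm, Finset.mul_sum]
      have hstep : ∀ s ∈ Finset.powersetCard r (Finset.univ : Finset (Fin n)),
          (∑ i : Fin n, siteOp n v A i) * orderedProd n v A s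
            = ∑ i ∈ sᶜ, ((w * w) ^ (((insert i s).filter (· < i)).card)) •
                orderedProd n v A (insert i s) := by
        intro s _
        rw [Finset.sum_mul]
        have key : ∀ i : Fin n, siteOp n v A i * orderedProd n v A s
            = if i ∈ sᶜ then ((w * w) ^ (((insert i s).filter (· < i)).card)) •
                orderedProd n v A (insert i s) else 0 := by
          intro i
          rw [siteOp_mul_orderedProd hA0 hA1 hA2]
          by_cases hi : i ∈ s
          · rw [if_pos hi, if_neg (by simpa using hi)]
          · rw [if_neg hi, if_pos (Finset.mem_compl.mpr hi),
              Finset.filter_insert, if_neg (lt_irrefl i)]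
        rw [Finset.sum_congr rfl (fun i _ => key i), ← Finset.sum_filter,
          Finset.filter_mem_eq_inter, Finset.univ_inter]
      rw [Finset.sum_congr rfl hstep,
        reindex_insert r (fun t i => ((w * w) ^ ((t.filter (· < i)).card)) •
          orderedProd n v A t),
        Finset.smul_sum, Finset.smul_sum]
      refine Finset.sum_congr rfl fun t ht => ?_
      rw [← Finset.sum_smul, rank_sum (w * w) t, Finset.mem_powersetCard_univ.mp ht,
        smul_smul]
      congr 1
      show auxF w r * ∑ m ∈ Finset.range (r + 1), (w * w) ^ m = auxF w (r + 1)
      rw [auxF]; ring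

end master

lemma qNum_inv (q : ℂ) (k : ℤ) : qNum q⁻¹ k = qNum q k := by
  unfold qNum
  rw [inv_inv, _root_.inv_zpow, _root_.inv_zpow, ← _root_.zpow_neg, ← _root_.zpow_neg, neg_neg,
    show q ^ (-k) - q ^ k = -(q ^ k - q ^ (-k)) by ring,
    show q⁻¹ - q = -(q - q⁻¹) by ring, neg_div_neg_eq]

lemma qFact_inv (q : ℂ) (r : ℕ) : qFact q⁻¹ r = qFact q r := by
  induction r with
  | zero => rfl
  | succ r ih => rw [qFact, qFact, qNum_inv, ih]

lemma nat_div_fact (r : ℕ) : (r + 1) * r / 2 = r * (r - 1) / 2 + r := by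
  rcases r with _ | m
  · rfl
  · have h : (m + 1 + 1) * (m + 1) = (m + 1) * (m + 1 - 1) + 2 * (m + 1) := by
      simp only [Nat.add_sub_cancel]; ring
    omega

lemma geom_qnum (u : ℂ) (hu : u ≠ 0) (hu2 : u ^ 2 ≠ 1) (r : ℕ) :
    ∑ m ∈ Finset.range (r + 1), (u * u) ^ m = u ^ r * qNum u ((r : ℤ) + 1) := by
  have huu : u * u ≠ 1 := by rwa [← sq]
  have hsub : u - u⁻¹ ≠ 0 := by
    intro h
    apply hu2
    have := sub_eq_zero.mp h
    field_simp at this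
    exact this
  have hsub2 : u * u - 1 ≠ 0 := sub_ne_zero.mpr huu
  rw [geom_sum_eq huu]
  unfold qNum
  rw [show ((r : ℤ) + 1) = ((r + 1 : ℕ) : ℤ) by push_cast; ring, _root_.zpow_neg, zpow_natCast]
  field_simp
  ring

lemma coeff_eq (u : ℂ) (hu : u ≠ 0) (hu2 : u ^ 2 ≠ 1) (r : ℕ) :
    u ^ (r * (r - 1) / 2) * qFact u r = auxF u r := by
  induction r with
  | zero => simp [auxF, qFact]
  | succ r ih =>
      rw [auxF, ← ih, qFact, geom_qnum u hu hu2 r,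
        show r + 1 - 1 = r from rfl, nat_div_fact, pow_add]
      push_cast
      ring

lemma sigmaP_sq : sigmaP * sigmaP = 0 := by
  ext a b
  fin_cases a <;> fin_cases b <;>
    simp [sigmaP, Matrix.mul_apply, Fin.sum_univ_two]

lemma sigmaM_sq : sigmaM * sigmaM = 0 := by
  ext a b
  fin_cases a <;> fin_cases b <;>
    simp [sigmaM, Matrix.mul_apply, Fin.sum_univ_two]

lemma dK_sigmaP (v : ℂ) (hv : v ≠ 0) : dK v * sigmaP = (v ^ 2) • (sigmaP * dK v) := by
  ext a b
  fin_cases a <;> fin_cases b <;>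
    simp [sigmaP, dK, Kdiag, Matrix.mul_apply, Matrix.diagonal_apply, Fin.sum_univ_two] <;>
    field_simp <;> ring

lemma sigmaP_dKinv (v : ℂ) (hv : v ≠ 0) :
    sigmaP * dK v⁻¹ = (v ^ 2) • (dK v⁻¹ * sigmaP) := by
  ext a b
  fin_cases a <;> fin_cases b <;>
    simp [sigmaP, dK, Kdiag, Matrix.mul_apply, Matrix.diagonal_apply, Fin.sum_univ_two] <;>
    field_simp <;> ring

lemma dK_sigmaM (v : ℂ) (hv : v ≠ 0) : dK v * sigmaM = ((v ^ 2)⁻¹) • (sigmaM * dK v) := by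
  ext a b
  fin_cases a <;> fin_cases b <;>
    simp [sigmaM, dK, Kdiag, Matrix.mul_apply, Matrix.diagonal_apply, Fin.sum_univ_two] <;>
    field_simp <;> ring

lemma sigmaM_dKinv (v : ℂ) (hv : v ≠ 0) :
    sigmaM * dK v⁻¹ = ((v ^ 2)⁻¹) • (dK v⁻¹ * sigmaM) := by
  ext a b
  fin_cases a <;> fin_cases b <;>
    simp [sigmaM, dK, Kdiag, Matrix.mul_apply, Matrix.diagonal_apply, Fin.sum_univ_two] <;>
    field_simp <;> ring

/-- `(S^±)^r = q^{±r(r−1)/2} [r]! Σ_{i₁<⋯<i_r} S^±_{i₁} ⋯ S^±_{i_r}`, `q = v²`. -/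
theorem stmt1 (n : ℕ) (hn : 1 ≤ n) (v : ℂ) (hv : v ≠ 0) (hq : (v ^ 2) ^ 2 ≠ 1)
    (r : ℕ) (hr : 1 ≤ r) :
    SpOp n v ^ r = ((v ^ 2) ^ (r * (r - 1) / 2) * qFact (v ^ 2) r) •
      ∑ s ∈ Finset.powersetCard r (Finset.univ : Finset (Fin n)), orderedProd n v sigmaP s ∧
    SmOp n v ^ r = (((v ^ 2) ^ (r * (r - 1) / 2))⁻¹ * qFact (v ^ 2) r) •
      ∑ s ∈ Finset.powersetCard r (Finset.univ : Finset (Fin n)), orderedProd n v sigmaM s := by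
  have hq0 : (v : ℂ) ^ 2 ≠ 0 := pow_ne_zero 2 hv
  constructor
  · rw [show SpOp n v = ∑ i : Fin n, siteOp n v sigmaP i from rfl,
      master sigmaP_sq (dK_sigmaP v hv) (sigmaP_dKinv v hv) r,
      ← coeff_eq (v ^ 2) hq0 hq r]
  · have hq0' : ((v : ℂ) ^ 2)⁻¹ ≠ 0 := inv_ne_zero hq0
    have hq2' : (((v : ℂ) ^ 2)⁻¹) ^ 2 ≠ 1 := by
      intro h
      rw [inv_pow, inv_eq_one] at h
      exact hq h
    rw [show SmOp n v = ∑ i : Fin n, siteOp n v sigmaM i from rfl,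
      master sigmaM_sq (dK_sigmaM v hv) (sigmaM_dKinv v hv) r,
      ← coeff_eq ((v ^ 2)⁻¹) hq0' hq2' r, inv_pow, qFact_inv]

end
end

section
/- If q = v² is a root of unity associated with the integer p (i.e., p ≥ 2 is the smallest positive integer with q^{2p} = 1), then (S^+)^p = 0 and (S^−)^p = 0 as endomorphisms of V = (ℂ²)^{⊗n}. -/
open Matrix Filter Topology BigOperators Finset

noncomputable section

/-! ### Auxiliary development for stmt2 -/

/-- spin sign: `+` ↦ 1, `−` ↦ −1 -/
def eps2 (s : Fin 2) : ℤ := if s = 0 then 1 else -1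

/-- set of sites where `x` and `y` differ -/
def flips (n : ℕ) (x y : Spins n) : Finset (Fin n) :=
  Finset.univ.filter fun k => x k ≠ y k

lemma mem_flips {n : ℕ} {x y : Spins n} {k : Fin n} :
    k ∈ flips n x y ↔ x k ≠ y k := by simp [flips]

def innI (n : ℕ) (x : Spins n) (A : Finset (Fin n)) (a : Fin n) : ℤ :=
  (∑ k : Fin n, if k ∉ A ∧ k < a then eps2 (x k) else 0)
  - ∑ k : Fin n, if k ∉ A ∧ a < k then eps2 (x k) else 0

def Xexp (n : ℕ) (x : Spins n) (A : Finset (Fin n)) : ℤ := ∑ a ∈ A, innI n x A a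

def Wexp (n : ℕ) (x : Spins n) (i : Fin n) : ℤ :=
  (∑ k : Fin n, if k < i then eps2 (x k) else 0)
  - ∑ k : Fin n, if i < k then eps2 (x k) else 0

def WtA (n : ℕ) (v : ℂ) (x : Spins n) (i : Fin n) : ℂ :=
  ∏ k : Fin n, if k < i then Kdiag v (x k) else if k = i then 1 else Kdiag v⁻¹ (x k)

def phiG (v : ℂ) (j : ℕ) : ℂ := ∑ m ∈ Finset.range j, (v ^ 4) ^ m

/-- closed form for the entries of `(S⁺)^r` -/
def cform (n : ℕ) (v : ℂ) (r : ℕ) (x y : Spins n) : ℂ :=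
  if (flips n x y).card = r ∧ ∀ k ∈ flips n x y, x k = 0 then
    v ^ (Xexp n x (flips n x y) - (r : ℤ) * ((r : ℤ) - 1)) * ∏ j ∈ Finset.range r, phiG v (j + 1)
  else 0

lemma fin2_resolve : ∀ a b : Fin 2, a ≠ b → a = 0 → b = 1 := by decide

lemma kdiag_zpow {v : ℂ} (hv : v ≠ 0) (s : Fin 2) : Kdiag v s = v ^ (eps2 s) := by
  unfold Kdiag eps2
  by_cases h : s = 0 <;> simp [h, _root_.zpow_neg]

lemma kdiag_inv_zpow {v : ℂ} (hv : v ≠ 0) (s : Fin 2) : Kdiag v⁻¹ s = v ^ (-eps2 s) := by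
  unfold Kdiag eps2
  by_cases h : s = 0 <;> simp [h, _root_.zpow_neg]

lemma prod_zpow_sum {α : Type*} {v : ℂ} (hv : v ≠ 0) (s : Finset α) (f : α → ℤ) :
    ∏ i ∈ s, v ^ f i = v ^ (∑ i ∈ s, f i) := by
  classical
  induction s using Finset.induction with
  | empty => simp
  | insert _ _ h ih => rw [Finset.prod_insert h, Finset.sum_insert h, zpow_add₀ hv, ih]

lemma wtA_eq {n : ℕ} {v : ℂ} (hv : v ≠ 0) (x : Spins n) (i : Fin n) :
    WtA n v x i = v ^ Wexp n x i := by
  unfold WtA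
  have h1 : ∀ k : Fin n,
      (if k < i then Kdiag v (x k) else if k = i then 1 else Kdiag v⁻¹ (x k))
        = v ^ (if k < i then eps2 (x k) else if k = i then 0 else -eps2 (x k)) := by
    intro k
    rcases lt_trichotomy k i with h | h | h
    · simp [h, kdiag_zpow hv]
    · simp [h, lt_irrefl]
    · simp [h, h.ne', not_lt_of_gt h, kdiag_inv_zpow hv]
  rw [Finset.prod_congr rfl fun k _ => h1 k, prod_zpow_sum hv]
  congr 1
  unfold Wexp
  rw [← Finset.sum_sub_distrib]
  apply Finset.sum_congr rfl
  intro k _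
  rcases lt_trichotomy k i with h | h | h
  · simp [h, not_lt_of_gt h]
  · simp [h, lt_irrefl]
  · simp [h, h.ne', not_lt_of_gt h]

lemma siteOp_sigmaP_apply (n : ℕ) (v : ℂ) (i : Fin n) (x z : Spins n) :
    siteOp n v sigmaP i x z =
      if x i = 0 ∧ z = Function.update x i 1 then WtA n v x i else 0 := by
  by_cases h : x i = 0 ∧ z = Function.update x i 1
  · obtain ⟨h0, hz⟩ := h
    subst hz
    rw [if_pos ⟨h0, rfl⟩]
    unfold siteOp WtA
    apply Finset.prod_congr rfl
    intro k _
    rcases lt_trichotomy k i with hk | hk | hk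
    · simp [hk, Function.update_of_ne hk.ne]
    · subst hk
      simp [lt_irrefl, sigmaP, h0]
    · simp [hk, hk.ne', not_lt_of_gt hk, Function.update_of_ne hk.ne']
  · rw [if_neg h]
    unfold siteOp
    by_cases h1 : x i = 0 ∧ z i = 1
    · have hz : z ≠ Function.update x i 1 := fun hc => h ⟨h1.1, hc⟩
      obtain ⟨k, hk⟩ := Function.ne_iff.mp hz
      have hki : k ≠ i := by
        intro e; subst e
        rw [Function.update_self] at hk
        exact hk h1.2
      rw [Function.update_of_ne hki] at hk
      apply Finset.prod_eq_zero (Finset.mem_univ k)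
      rcases lt_trichotomy k i with hlt | he | hgt
      · simp only [if_pos hlt]
        rw [if_neg (fun e : x k = z k => hk e.symm)]
      · exact absurd he hki
      · simp only [if_neg (not_lt_of_gt hgt), if_neg hki]
        rw [if_neg (fun e : x k = z k => hk e.symm)]
    · apply Finset.prod_eq_zero (Finset.mem_univ i)
      rw [if_neg (lt_irrefl i), if_pos rfl]
      unfold sigmaP
      rw [if_neg h1]

lemma spOp_mul_apply (n : ℕ) (v : ℂ) (B : Matrix (Spins n) (Spins n) ℂ) (x y : Spins n) :
    (SpOp n v * B) x y =
      ∑ i : Fin n, if x i = 0 then WtA n v x i * B (Function.update x i 1) y else 0 := by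
  rw [Matrix.mul_apply]
  unfold SpOp
  simp only [Matrix.sum_apply, Finset.sum_mul]
  rw [Finset.sum_comm]
  apply Finset.sum_congr rfl
  intro i _
  rw [Finset.sum_congr rfl fun z _ => by rw [siteOp_sigmaP_apply]]
  by_cases h0 : x i = 0
  · simp only [h0, true_and, if_true, ite_mul, zero_mul]
    rw [Finset.sum_ite_eq' Finset.univ (Function.update x i 1)
      (fun z => WtA n v x i * B z y)]
    simp
  · simp [h0]

lemma filter_lt_add_filter_gt {n : ℕ} (A : Finset (Fin n)) (i : Fin n) (hi : i ∈ A) :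
    (A.filter fun b => b < i).card + (A.filter fun b => i < b).card + 1 = A.card := by
  classical
  have hdisj : Disjoint (A.filter fun b => b < i) (A.filter fun b => i < b) := by
    rw [Finset.disjoint_left]
    intro b hb1 hb2
    exact absurd ((Finset.mem_filter.mp hb1).2.trans (Finset.mem_filter.mp hb2).2) (lt_irrefl b)
  have hunion : (A.filter fun b => b < i) ∪ (A.filter fun b => i < b) = A.erase i := by
    ext b
    simp only [Finset.mem_union, Finset.mem_filter, Finset.mem_erase]
    constructor
    · rintro (⟨hb, hlt⟩ | ⟨hb, hlt⟩)
      · exact ⟨hlt.ne, hb⟩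
      · exact ⟨hlt.ne', hb⟩
    · rintro ⟨hne, hb⟩
      rcases lt_or_gt_of_ne hne with h | h
      · exact Or.inl ⟨hb, h⟩
      · exact Or.inr ⟨hb, h⟩
  have hcard := Finset.card_union_of_disjoint hdisj
  rw [hunion, Finset.card_erase_of_mem hi] at hcard
  have hpos : 1 ≤ A.card := Finset.card_pos.mpr ⟨i, hi⟩
  omega

lemma sum_filter_lt_card {n : ℕ} (A : Finset (Fin n)) (f : ℕ → ℂ) :
    ∑ i ∈ A, f ((A.filter fun b => b < i).card) = ∑ m ∈ Finset.range A.card, f m := by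
  classical
  induction A using Finset.strongInduction with
  | _ A ih =>
    rcases A.eq_empty_or_nonempty with rfl | hA
    · simp
    · have hMA : A.max' hA ∈ A := A.max'_mem hA
      set M := A.max' hA with hM
      have hsub : A.erase M ⊂ A := Finset.erase_ssubset hMA
      have key : ∀ i ∈ A.erase M,
          (A.filter fun b => b < i) = ((A.erase M).filter fun b => b < i) := by
        intro i hi
        obtain ⟨hiM, hiA⟩ := Finset.mem_erase.mp hi
        have hiltM : i < M := lt_of_le_of_ne (A.le_max' i hiA) hiM
        ext b
        simp only [Finset.mem_filter, Finset.mem_erase]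
        constructor
        · rintro ⟨hbA, hbi⟩
          exact ⟨⟨(hbi.trans hiltM).ne, hbA⟩, hbi⟩
        · rintro ⟨⟨_, hbA⟩, hbi⟩
          exact ⟨hbA, hbi⟩
      have hfM : (A.filter fun b => b < M) = A.erase M := by
        ext b
        simp only [Finset.mem_filter, Finset.mem_erase]
        constructor
        · rintro ⟨hbA, hb⟩
          exact ⟨hb.ne, hbA⟩
        · rintro ⟨hb, hbA⟩
          exact ⟨hbA, lt_of_le_of_ne (A.le_max' b hbA) hb⟩
      rw [← Finset.add_sum_erase _ _ hMA,
        Finset.sum_congr rfl (fun i hi => by rw [key i hi]), ih _ hsub, hfM,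
        Finset.card_erase_of_mem hMA]
      have h1 : 1 ≤ A.card := Finset.card_pos.mpr hA
      obtain ⟨c, hc⟩ : ∃ c, A.card = c + 1 := ⟨A.card - 1, by omega⟩
      rw [hc]
      simp only [Nat.add_sub_cancel]
      rw [Finset.sum_range_succ]
      ring

lemma flips_update {n : ℕ} (x y : Spins n) (i : Fin n) (hxi : x i = 0) (hyi : y i = 1) :
    flips n (Function.update x i 1) y = (flips n x y).erase i := by
  ext k
  by_cases hk : k = i
  · subst hk
    simp [mem_flips, Function.update_self, hyi, Finset.mem_erase]
  · simp [mem_flips, Function.update_of_ne hk, Finset.mem_erase, hk]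

lemma erase_filter_lt {n : ℕ} (A : Finset (Fin n)) (i : Fin n) :
    ((A.erase i).filter fun b => b < i) = A.filter fun b => b < i := by
  ext b
  simp only [Finset.mem_filter, Finset.mem_erase]
  constructor
  · rintro ⟨⟨_, hbA⟩, hb⟩
    exact ⟨hbA, hb⟩
  · rintro ⟨hbA, hb⟩
    exact ⟨⟨hb.ne, hbA⟩, hb⟩

lemma erase_filter_gt {n : ℕ} (A : Finset (Fin n)) (i : Fin n) :
    ((A.erase i).filter fun b => i < b) = A.filter fun b => i < b := by
  ext b
  simp only [Finset.mem_filter, Finset.mem_erase]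
  constructor
  · rintro ⟨⟨_, hbA⟩, hb⟩
    exact ⟨hbA, hb⟩
  · rintro ⟨hbA, hb⟩
    exact ⟨⟨hb.ne', hbA⟩, hb⟩

lemma sum_indicator_card {n : ℕ} (A : Finset (Fin n)) (p : Fin n → Prop) [DecidablePred p] :
    (∑ k : Fin n, if k ∈ A ∧ p k then (1 : ℤ) else 0) = ((A.filter p).card : ℤ) := by
  classical
  rw [← Finset.sum_filter]
  have : Finset.univ.filter (fun k => k ∈ A ∧ p k) = A.filter p := by
    ext b; simp [Finset.mem_filter]
  rw [this]
  simp

lemma xexp_update {n : ℕ} (x : Spins n) (A : Finset (Fin n)) (i : Fin n) (hi : i ∈ A)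
    (hA : ∀ k ∈ A, x k = 0) :
    Wexp n x i + Xexp n (Function.update x i 1) (A.erase i)
      = Xexp n x A + 2 * ((A.filter fun b => b < i).card : ℤ)
          - 2 * ((A.filter fun b => i < b).card : ℤ) := by
  classical
  -- Step A: inner terms over the erased set
  have hstep : ∀ b ∈ A.erase i,
      innI n (Function.update x i 1) (A.erase i) b
        = innI n x A b - (if i < b then (1 : ℤ) else 0) + (if b < i then (1 : ℤ) else 0) := by
    intro b hb
    obtain ⟨hbi, hbA⟩ := Finset.mem_erase.mp hb
    unfold innI
    have e1 : ∀ k : Fin n,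
        (if k ∉ A.erase i ∧ k < b then eps2 (Function.update x i 1 k) else 0)
          = (if k ∉ A ∧ k < b then eps2 (x k) else 0)
            + (if k = i ∧ i < b then (-1 : ℤ) else 0) := by
      intro k
      rcases eq_or_ne k i with rfl | hk
      · simp [Finset.mem_erase, hi, Function.update_self, eps2]
      · simp [Finset.mem_erase, hk, Function.update_of_ne hk]
    have e2 : ∀ k : Fin n,
        (if k ∉ A.erase i ∧ b < k then eps2 (Function.update x i 1 k) else 0)
          = (if k ∉ A ∧ b < k then eps2 (x k) else 0)
            + (if k = i ∧ b < i then (-1 : ℤ) else 0) := by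
      intro k
      rcases eq_or_ne k i with rfl | hk
      · simp [Finset.mem_erase, hi, Function.update_self, eps2]
      · simp [Finset.mem_erase, hk, Function.update_of_ne hk]
    rw [Finset.sum_congr rfl fun k _ => e1 k, Finset.sum_congr rfl fun k _ => e2 k,
      Finset.sum_add_distrib, Finset.sum_add_distrib]
    have s1 : (∑ k : Fin n, if k = i ∧ i < b then (-1 : ℤ) else 0)
        = if i < b then (-1 : ℤ) else 0 := by
      simp only [ite_and]
      rw [Finset.sum_ite_eq' Finset.univ i (fun _ => if i < b then (-1 : ℤ) else 0)]
      simp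
    have s2 : (∑ k : Fin n, if k = i ∧ b < i then (-1 : ℤ) else 0)
        = if b < i then (-1 : ℤ) else 0 := by
      simp only [ite_and]
      rw [Finset.sum_ite_eq' Finset.univ i (fun _ => if b < i then (-1 : ℤ) else 0)]
      simp
    rw [s1, s2]
    by_cases h1 : i < b <;> by_cases h2 : b < i <;> simp [h1, h2] <;> ring
  -- Step B : Wexp in terms of innI at i
  have hWexp : Wexp n x i = innI n x A i
      + ((A.filter fun b => b < i).card : ℤ) - ((A.filter fun b => i < b).card : ℤ) := by
    unfold Wexp innI
    have e1 : ∀ k : Fin n,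
        (if k < i then eps2 (x k) else 0)
          = (if k ∉ A ∧ k < i then eps2 (x k) else 0) + (if k ∈ A ∧ k < i then (1 : ℤ) else 0) := by
      intro k
      by_cases hkA : k ∈ A <;> by_cases hki : k < i <;>
        simp [hkA, hki, eps2, hA k]
    have e2 : ∀ k : Fin n,
        (if i < k then eps2 (x k) else 0)
          = (if k ∉ A ∧ i < k then eps2 (x k) else 0) + (if k ∈ A ∧ i < k then (1 : ℤ) else 0) := by
      intro k
      by_cases hkA : k ∈ A <;> by_cases hki : i < k <;>
        simp [hkA, hki, eps2, hA k]
    rw [Finset.sum_congr rfl fun k _ => e1 k, Finset.sum_congr rfl fun k _ => e2 k,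
      Finset.sum_add_distrib, Finset.sum_add_distrib,
      sum_indicator_card A (fun b => b < i), sum_indicator_card A (fun b => i < b)]
    ring
  -- assemble
  have hXsplit : ∑ b ∈ A.erase i, innI n x A b = Xexp n x A - innI n x A i := by
    have := Finset.add_sum_erase A (innI n x A) hi
    unfold Xexp
    omega
  have hXe : Xexp n (Function.update x i 1) (A.erase i)
      = (Xexp n x A - innI n x A i)
        - (((A.erase i).filter fun b => i < b).card : ℤ)
        + (((A.erase i).filter fun b => b < i).card : ℤ) := by
    unfold Xexp
    rw [Finset.sum_congr rfl hstep, Finset.sum_add_distrib, Finset.sum_sub_distrib, hXsplit]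
    have t1 : (∑ b ∈ A.erase i, if i < b then (1 : ℤ) else 0)
        = (((A.erase i).filter fun b => i < b).card : ℤ) := by
      rw [← Finset.sum_filter]
      simp
    have t2 : (∑ b ∈ A.erase i, if b < i then (1 : ℤ) else 0)
        = (((A.erase i).filter fun b => b < i).card : ℤ) := by
      rw [← Finset.sum_filter]
      simp
    rw [t1, t2]
    rfl
  rw [hWexp, hXe, erase_filter_lt, erase_filter_gt]
  ring

lemma spPow_apply (n : ℕ) {v : ℂ} (hv : v ≠ 0) (r : ℕ) (x y : Spins n) :
    (SpOp n v ^ r) x y = cform n v r x y := by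
  induction r generalizing x with
  | zero =>
    rw [pow_zero]
    unfold cform
    by_cases hxy : x = y
    · subst hxy
      have hf : flips n x x = ∅ := by
        ext k; simp [mem_flips]
      rw [Matrix.one_apply_eq, if_pos]
      · simp [hf, Xexp]
      · simp [hf]
    · rw [Matrix.one_apply_ne hxy, if_neg]
      rintro ⟨hc, -⟩
      apply hxy
      funext k
      by_contra hk
      have : k ∈ flips n x y := mem_flips.mpr hk
      rw [Finset.card_eq_zero.mp hc] at this
      exact absurd this (Finset.notMem_empty k)
  | succ r ih =>
    rw [pow_succ', spOp_mul_apply,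
      Finset.sum_congr rfl fun i _ => by rw [ih]]
    by_cases H : (flips n x y).card = r + 1 ∧ ∀ k ∈ flips n x y, x k = 0
    · obtain ⟨Hc, Hup⟩ := H
      -- restrict the sum to i ∈ flips n x y
      have hzero : ∀ i ∈ Finset.univ, i ∉ flips n x y →
          (if x i = 0 then WtA n v x i * cform n v r (Function.update x i 1) y else 0) = 0 := by
        intro i _ hiA
        by_cases h0 : x i = 0
        · rw [if_pos h0]
          have hyi : y i = x i := by
            by_contra hne
            exact hiA (mem_flips.mpr fun e => hne e.symm)
          have hiF : i ∈ flips n (Function.update x i 1) y := by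
            rw [mem_flips, Function.update_self, hyi, h0]
            decide
          have hcf : cform n v r (Function.update x i 1) y = 0 := by
            unfold cform
            rw [if_neg]
            rintro ⟨-, hup⟩
            have := hup i hiF
            rw [Function.update_self] at this
            exact absurd this (by decide)
          rw [hcf, mul_zero]
        · rw [if_neg h0]
      rw [← Finset.sum_subset (Finset.subset_univ (flips n x y)) hzero]
      set A := flips n x y with hA
      -- evaluate each term
      have hterm : ∀ i ∈ A,
          (if x i = 0 then WtA n v x i * cform n v r (Function.update x i 1) y else 0)
            = v ^ (Xexp n x A - ((r : ℤ) + 1) * ((r : ℤ) + 1 - 1))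
                * ((v ^ 4) ^ ((A.filter fun b => b < i).card)
                  * ∏ j ∈ Finset.range r, phiG v (j + 1)) := by
        intro i hi
        have h0 : x i = 0 := Hup i hi
        have hyi : y i = 1 := fin2_resolve _ _ (mem_flips.mp hi) h0
        have hfe : flips n (Function.update x i 1) y = A.erase i :=
          flips_update x y i h0 hyi
        have hcard : (A.erase i).card = r := by
          rw [Finset.card_erase_of_mem hi, Hc]
          omega
        have hup' : ∀ k ∈ flips n (Function.update x i 1) y, Function.update x i 1 k = 0 := by
          intro k hk
          rw [hfe] at hk
          obtain ⟨hki, hkA⟩ := Finset.mem_erase.mp hk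
          rw [Function.update_of_ne hki]
          exact Hup k hkA
        rw [if_pos h0]
        unfold cform
        rw [if_pos ⟨by rw [hfe]; exact hcard, hup'⟩, hfe]
        rw [wtA_eq hv, ← mul_assoc, ← zpow_add₀ hv]
        have hcd := filter_lt_add_filter_gt A i hi
        rw [Hc] at hcd
        have hXU := xexp_update x A i hi Hup
        set ci := (A.filter fun b => b < i).card with hci
        set di := (A.filter fun b => i < b).card with hdi
        have hdi' : (di : ℤ) = r - ci := by omega
        have hexp : Wexp n x i + Xexp n (Function.update x i 1) (A.erase i) - (r : ℤ) * ((r : ℤ) - 1)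
            = (Xexp n x A - ((r : ℤ) + 1) * ((r : ℤ) + 1 - 1)) + 4 * (ci : ℤ) := by
          rw [hdi'] at hXU
          linear_combination hXU
        rw [show Wexp n x i + (Xexp n (Function.update x i 1) (A.erase i) - (r : ℤ) * ((r : ℤ) - 1))
            = Wexp n x i + Xexp n (Function.update x i 1) (A.erase i) - (r : ℤ) * ((r : ℤ) - 1) by ring,
          hexp, zpow_add₀ hv]
        rw [show (4 : ℤ) * (ci : ℤ) = ((4 * ci : ℕ) : ℤ) by push_cast; ring, zpow_natCast,
          pow_mul]
        ring
      rw [Finset.sum_congr rfl hterm, ← Finset.mul_sum, ← Finset.sum_mul,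
        sum_filter_lt_card A (fun m => (v ^ 4) ^ m), Hc]
      unfold cform
      rw [if_pos ⟨Hc, Hup⟩]
      rw [Finset.prod_range_succ]
      push_cast
      unfold phiG
      ring
    · rw [Finset.sum_eq_zero, cform, if_neg H]
      intro i _
      by_cases h0 : x i = 0
      · rw [if_pos h0]
        suffices h : cform n v r (Function.update x i 1) y = 0 by rw [h, mul_zero]
        unfold cform
        rw [if_neg]
        rintro ⟨hc, hup⟩
        by_cases hiA : i ∈ flips n x y
        · have hyi : y i = 1 := fin2_resolve _ _ (mem_flips.mp hiA) h0
          have hfe := flips_update x y i h0 hyi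
          rw [hfe] at hc
          apply H
          refine ⟨?_, ?_⟩
          · have h1 : 1 ≤ (flips n x y).card := Finset.card_pos.mpr ⟨i, hiA⟩
            have := Finset.card_erase_of_mem hiA
            omega
          · intro k hk
            rcases eq_or_ne k i with rfl | hk2
            · exact h0
            · have hk3 : k ∈ (flips n x y).erase i := Finset.mem_erase.mpr ⟨hk2, hk⟩
              rw [← hfe] at hk3
              have := hup k hk3
              rwa [Function.update_of_ne hk2] at this
        · have hyi : y i = x i := by
            by_contra hne
            exact hiA (mem_flips.mpr fun e => hne e.symm)
          have hiF : i ∈ flips n (Function.update x i 1) y := by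
            rw [mem_flips, Function.update_self, hyi, h0]
            decide
          have := hup i hiF
          rw [Function.update_self] at this
          exact absurd this (by decide)
      · rw [if_neg h0]

lemma smOp_eq_transpose (n : ℕ) (v : ℂ) : SmOp n v = (SpOp n v)ᵀ := by
  funext x y
  show SmOp n v x y = SpOp n v y x
  unfold SmOp SpOp
  rw [Matrix.sum_apply, Matrix.sum_apply]
  apply Finset.sum_congr rfl
  intro i _
  unfold siteOp
  apply Finset.prod_congr rfl
  intro k _
  by_cases h1 : k < i
  · rw [if_pos h1, if_pos h1]
    by_cases h2 : x k = y k
    · rw [if_pos h2, if_pos h2.symm, h2]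
    · rw [if_neg h2, if_neg fun e => h2 e.symm]
  · rw [if_neg h1, if_neg h1]
    by_cases h3 : k = i
    · rw [if_pos h3, if_pos h3]
      unfold sigmaM sigmaP
      by_cases h4 : x k = 1 ∧ y k = 0
      · rw [if_pos h4, if_pos ⟨h4.2, h4.1⟩]
      · rw [if_neg h4, if_neg fun h => h4 ⟨h.2, h.1⟩]
    · rw [if_neg h3, if_neg h3]
      by_cases h2 : x k = y k
      · rw [if_pos h2, if_pos h2.symm, h2]
      · rw [if_neg h2, if_neg fun e => h2 e.symm]

/-- if `q = v²` is a root of unity associated with `p`, then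
`(S^+)^p = 0` and `(S^−)^p = 0` on `(ℂ²)^{⊗n}`. -/
theorem stmt2 (n p : ℕ) (hn : 1 ≤ n) (v : ℂ) (hv : v ≠ 0)
    (hroot : AssocRootOfUnity (v ^ 2) p) :
    SpOp n v ^ p = 0 ∧ SmOp n v ^ p = 0 := by
  obtain ⟨hp2, hq1, hmin⟩ := hroot
  have hq4 : v ^ 4 ≠ 1 := by
    have h := hmin 1 one_pos (by omega)
    intro hc
    apply h
    rw [show (v ^ 2) ^ (2 * 1) = v ^ 4 by ring, hc]
  have hv4p : (v ^ 4) ^ p = 1 := by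
    rw [show (v ^ 4) ^ p = (v ^ 2) ^ (2 * p) by ring, hq1]
  have hphi : phiG v p = 0 := by
    unfold phiG
    rw [geom_sum_eq hq4 p, hv4p, sub_self, zero_div]
  have hprod : ∏ j ∈ Finset.range p, phiG v (j + 1) = 0 := by
    apply Finset.prod_eq_zero (Finset.mem_range.mpr (show p - 1 < p by omega))
    rw [show p - 1 + 1 = p by omega, hphi]
  have hSp : SpOp n v ^ p = 0 := by
    funext x y
    rw [show (0 : Matrix (Spins n) (Spins n) ℂ) x y = 0 from rfl]
    rw [spPow_apply n hv p x y]
    unfold cform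
    split_ifs with h
    · rw [hprod, mul_zero]
    · rfl
  refine ⟨hSp, ?_⟩
  rw [smOp_eq_transpose, ← Matrix.transpose_pow, hSp, Matrix.transpose_zero]

end
end

section
/- For all integers a, b ≥ 0, the operators (S^−)^a (S^+)^a and (S^−)^b (S^+)^b on V = (ℂ²)^{⊗n} commute: (S^−)^a (S^+)^a (S^−)^b (S^+)^b = (S^−)^b (S^+)^b (S^−)^a (S^+)^a. -/
open Matrix Filter Topology BigOperators Finset

noncomputable section

-- tensor of local matrices
def tens {n : ℕ} (M : Fin n → Matrix (Fin 2) (Fin 2) ℂ) : Matrix (Spins n) (Spins n) ℂ :=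
  fun x y => ∏ k, M k (x k) (y k)

lemma tens_mul {n : ℕ} (M N : Fin n → Matrix (Fin 2) (Fin 2) ℂ) :
    tens M * tens N = tens (fun k => M k * N k) := by
  ext x y
  simp only [Matrix.mul_apply, tens]
  rw [Fintype.prod_sum (fun k c => M k (x k) c * N k c (y k))]
  exact Finset.sum_congr rfl fun z _ => (Finset.prod_mul_distrib).symm

def locOf (n : ℕ) (v : ℂ) (A : Matrix (Fin 2) (Fin 2) ℂ) (i : Fin n) (k : Fin n) :
    Matrix (Fin 2) (Fin 2) ℂ :=
  if k < i then Matrix.diagonal (Kdiag v) else if k = i then A else Matrix.diagonal (Kdiag v⁻¹)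

lemma siteOp_eq_tens (n : ℕ) (v : ℂ) (A : Matrix (Fin 2) (Fin 2) ℂ) (i : Fin n) :
    siteOp n v A i = tens (locOf n v A i) := by
  ext x y
  unfold siteOp tens locOf
  apply Finset.prod_congr rfl
  intro k _
  by_cases h1 : k < i <;> by_cases h2 : k = i <;>
    simp [h1, h2, Matrix.diagonal, Matrix.of_apply, eq_comm]

lemma tens_eq_two_scalars {n : ℕ} (M N : Fin n → Matrix (Fin 2) (Fin 2) ℂ)
    (i j : Fin n) (hij : i ≠ j) (c : ℂ) (hc : c ≠ 0)
    (hi : M i = c • N i) (hj : M j = c⁻¹ • N j)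
    (hk : ∀ k, k ≠ i → k ≠ j → M k = N k) : tens M = tens N := by
  ext x y
  unfold tens
  rw [← Finset.mul_prod_erase univ _ (mem_univ i),
      ← Finset.mul_prod_erase _ _ (Finset.mem_erase.mpr ⟨Ne.symm hij, mem_univ j⟩),
      ← Finset.mul_prod_erase univ (fun k => N k (x k) (y k)) (mem_univ i),
      ← Finset.mul_prod_erase _ _ (Finset.mem_erase.mpr ⟨Ne.symm hij, mem_univ j⟩)]
  have hrest : ∏ k ∈ (univ.erase i).erase j, M k (x k) (y k)
      = ∏ k ∈ (univ.erase i).erase j, N k (x k) (y k) := by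
    apply Finset.prod_congr rfl
    intro k hkm
    rw [Finset.mem_erase, Finset.mem_erase] at hkm
    rw [hk k hkm.2.1 hkm.1]
  rw [hrest, hi, hj]
  simp only [Matrix.smul_apply, smul_eq_mul]
  field_simp

lemma sP_mul_dK (v : ℂ) : sigmaP * Matrix.diagonal (Kdiag v) = v⁻¹ • sigmaP := by
  ext a b; fin_cases a <;> fin_cases b <;>
    simp [sigmaP, Kdiag, Matrix.mul_apply, Fin.sum_univ_two, Matrix.diagonal]

lemma dK_mul_sP (v : ℂ) : Matrix.diagonal (Kdiag v) * sigmaP = v • sigmaP := by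
  ext a b; fin_cases a <;> fin_cases b <;>
    simp [sigmaP, Kdiag, Matrix.mul_apply, Fin.sum_univ_two, Matrix.diagonal]

lemma sM_mul_dK (v : ℂ) : sigmaM * Matrix.diagonal (Kdiag v) = v • sigmaM := by
  ext a b; fin_cases a <;> fin_cases b <;>
    simp [sigmaM, Kdiag, Matrix.mul_apply, Fin.sum_univ_two, Matrix.diagonal]

lemma dK_mul_sM (v : ℂ) : Matrix.diagonal (Kdiag v) * sigmaM = v⁻¹ • sigmaM := by
  ext a b; fin_cases a <;> fin_cases b <;>
    simp [sigmaM, Kdiag, Matrix.mul_apply, Fin.sum_univ_two, Matrix.diagonal]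

lemma cross_comm (n : ℕ) (v : ℂ) (hv : v ≠ 0) (i j : Fin n) (hij : i ≠ j) :
    siteOp n v sigmaP i * siteOp n v sigmaM j = siteOp n v sigmaM j * siteOp n v sigmaP i := by
  rw [siteOp_eq_tens, siteOp_eq_tens, tens_mul, tens_mul]
  have hkgen : ∀ k, k ≠ i → k ≠ j →
      locOf n v sigmaP i k * locOf n v sigmaM j k = locOf n v sigmaM j k * locOf n v sigmaP i k := by
    intro k hki hkj
    by_cases h1 : k < i <;> by_cases h2 : k < j <;>
      simp [locOf, hki, hkj, h1, h2, Matrix.diagonal_mul_diagonal, mul_comm]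
  rcases lt_trichotomy i j with hlt | heq | hgt
  · refine tens_eq_two_scalars _ _ i j hij (v⁻¹ * v⁻¹) (by simp [hv]) ?_ ?_ hkgen
    · have : locOf n v sigmaP i i = sigmaP := by simp [locOf]
      have h2 : locOf n v sigmaM j i = Matrix.diagonal (Kdiag v) := by
        simp [locOf, hlt]
      have h3 : locOf n v sigmaM j i * locOf n v sigmaP i i
          = Matrix.diagonal (Kdiag v) * sigmaP := by rw [this, h2]
      rw [this, h2, sP_mul_dK, dK_mul_sP, smul_smul]
      congr 1
      field_simp
    · have h1 : locOf n v sigmaM j j = sigmaM := by simp [locOf, lt_irrefl, hlt.not_gt]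
      have h2 : locOf n v sigmaP i j = Matrix.diagonal (Kdiag v⁻¹) := by
        simp [locOf, hlt.not_gt, (Ne.symm hij)]
      rw [h1, h2, dK_mul_sM, sM_mul_dK, smul_smul]
      congr 1
      field_simp
  · exact absurd heq hij
  · refine tens_eq_two_scalars _ _ i j hij (v * v) (by simp [hv]) ?_ ?_ hkgen
    · have h1 : locOf n v sigmaP i i = sigmaP := by simp [locOf]
      have h2 : locOf n v sigmaM j i = Matrix.diagonal (Kdiag v⁻¹) := by
        simp [locOf, hgt.not_gt, hij]
      rw [h1, h2, sP_mul_dK, dK_mul_sP, inv_inv, smul_smul]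
      congr 1
      field_simp
    · have h1 : locOf n v sigmaM j j = sigmaM := by simp [locOf, lt_irrefl]
      have h2 : locOf n v sigmaP i j = Matrix.diagonal (Kdiag v) := by
        simp [locOf, hgt]
      rw [h1, h2, dK_mul_sM, sM_mul_dK, smul_smul]
      congr 1
      field_simp

def wt {n : ℕ} (x : Spins n) : ℤ := ∑ k, (if x k = 0 then (1 : ℤ) else -1)

def Dg {n : ℕ} (f : ℤ → ℂ) : Matrix (Spins n) (Spins n) ℂ :=
  Matrix.diagonal (fun x => f (wt x))

lemma Dg_mul_Dg {n : ℕ} (f g : ℤ → ℂ) :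
    (Dg f : Matrix (Spins n) (Spins n) ℂ) * Dg g = Dg (fun m => f m * g m) := by
  unfold Dg; rw [Matrix.diagonal_mul_diagonal]

lemma Dg_comm {n : ℕ} (f g : ℤ → ℂ) :
    (Dg f : Matrix (Spins n) (Spins n) ℂ) * Dg g = Dg g * Dg f := by
  have : (fun m => f m * g m) = fun m => g m * f m := by funext m; ring
  rw [Dg_mul_Dg, Dg_mul_Dg, this]

lemma siteOp_sigmaP_support {n : ℕ} {v : ℂ} {i : Fin n} {x y : Spins n}
    (h : siteOp n v sigmaP i x y ≠ 0) : x i = 0 ∧ y i = 1 ∧ ∀ k, k ≠ i → x k = y k := by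
  rw [siteOp, Finset.prod_ne_zero_iff] at h
  have hi := h i (mem_univ i)
  simp only [lt_irrefl, if_false, if_pos rfl] at hi
  have hxy : x i = 0 ∧ y i = 1 := by
    by_contra hc
    rw [sigmaP, if_neg hc] at hi
    exact hi rfl
  refine ⟨hxy.1, hxy.2, fun k hk => ?_⟩
  have hk2 := h k (mem_univ k)
  by_cases h1 : k < i
  · rw [if_pos h1] at hk2
    by_contra hne
    rw [if_neg hne] at hk2
    exact hk2 rfl
  · rw [if_neg h1, if_neg hk] at hk2
    by_contra hne
    rw [if_neg hne] at hk2
    exact hk2 rfl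

lemma siteOp_sigmaM_support {n : ℕ} {v : ℂ} {i : Fin n} {x y : Spins n}
    (h : siteOp n v sigmaM i x y ≠ 0) : x i = 1 ∧ y i = 0 ∧ ∀ k, k ≠ i → x k = y k := by
  rw [siteOp, Finset.prod_ne_zero_iff] at h
  have hi := h i (mem_univ i)
  rw [if_neg (lt_irrefl i), if_pos rfl] at hi
  have hxy : x i = 1 ∧ y i = 0 := by
    by_contra hc
    rw [sigmaM, if_neg hc] at hi
    exact hi rfl
  refine ⟨hxy.1, hxy.2, fun k hk => ?_⟩
  have hk2 := h k (mem_univ k)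
  by_cases h1 : k < i
  · rw [if_pos h1] at hk2
    by_contra hne
    rw [if_neg hne] at hk2
    exact hk2 rfl
  · rw [if_neg h1, if_neg hk] at hk2
    by_contra hne
    rw [if_neg hne] at hk2
    exact hk2 rfl

lemma wt_eq_of_flip {n : ℕ} {x y : Spins n} {i : Fin n} (hx : x i = 0) (hy : y i = 1)
    (hk : ∀ k, k ≠ i → x k = y k) : wt x = wt y + 2 := by
  unfold wt
  rw [← Finset.add_sum_erase _ _ (mem_univ i), ← Finset.add_sum_erase _ _ (mem_univ i)]
  have : ∑ k ∈ univ.erase i, (if x k = 0 then (1:ℤ) else -1)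
      = ∑ k ∈ univ.erase i, (if y k = 0 then (1:ℤ) else -1) := by
    apply Finset.sum_congr rfl
    intro k hkm
    rw [hk k (Finset.mem_erase.mp hkm).1]
  rw [this, hx, hy]
  norm_num
  ring

lemma wt_eq_of_flipM {n : ℕ} {x y : Spins n} {i : Fin n} (hx : x i = 1) (hy : y i = 0)
    (hk : ∀ k, k ≠ i → x k = y k) : wt x = wt y - 2 := by
  have := wt_eq_of_flip hy hx (fun k h => (hk k h).symm)
  omega

lemma Dg_mul_siteP {n : ℕ} (v : ℂ) (f : ℤ → ℂ) (i : Fin n) :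
    Dg f * siteOp n v sigmaP i = siteOp n v sigmaP i * Dg (fun m => f (m + 2)) := by
  ext x y
  unfold Dg
  rw [Matrix.diagonal_mul, Matrix.mul_diagonal]
  by_cases h : siteOp n v sigmaP i x y = 0
  · rw [h]; ring
  · obtain ⟨h1, h2, h3⟩ := siteOp_sigmaP_support h
    rw [wt_eq_of_flip h1 h2 h3]
    ring

lemma Dg_mul_siteM {n : ℕ} (v : ℂ) (f : ℤ → ℂ) (i : Fin n) :
    Dg f * siteOp n v sigmaM i = siteOp n v sigmaM i * Dg (fun m => f (m - 2)) := by
  ext x y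
  unfold Dg
  rw [Matrix.diagonal_mul, Matrix.mul_diagonal]
  by_cases h : siteOp n v sigmaM i x y = 0
  · rw [h]; ring
  · obtain ⟨h1, h2, h3⟩ := siteOp_sigmaM_support h
    rw [wt_eq_of_flipM h1 h2 h3]
    norm_num
    ring_nf

lemma Dg_mul_Sp {n : ℕ} (v : ℂ) (f : ℤ → ℂ) :
    Dg f * SpOp n v = SpOp n v * Dg (fun m => f (m + 2)) := by
  unfold SpOp
  rw [Finset.mul_sum, Finset.sum_mul]
  exact Finset.sum_congr rfl fun i _ => Dg_mul_siteP v f i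

lemma Dg_mul_Sm {n : ℕ} (v : ℂ) (f : ℤ → ℂ) :
    Dg f * SmOp n v = SmOp n v * Dg (fun m => f (m - 2)) := by
  unfold SmOp
  rw [Finset.mul_sum, Finset.sum_mul]
  exact Finset.sum_congr rfl fun i _ => Dg_mul_siteM v f i

def gfun (Q : ℂ) (s : ℤ) : ℂ :=
  if Q ^ 2 = 1 then (s : ℂ) * Q else (Q ^ (2 * s) - 1) * Q / (Q ^ 2 - 1)

def hfun (Q : ℂ) (m : ℤ) : ℂ := Q ^ (-m) * gfun Q m

lemma gfun_zero (Q : ℂ) : gfun Q 0 = 0 := by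
  unfold gfun; split <;> simp

lemma gfun_step (Q : ℂ) (hQ : Q ≠ 0) (s : ℤ) :
    gfun Q (s + 1) = gfun Q s + Q ^ (2 * s + 1) := by
  unfold gfun
  have h2s : Q ^ (2 * s + 1) = (Q ^ 2) ^ s * Q := by
    rw [zpow_add₀ hQ, zpow_one, _root_.zpow_mul]
    norm_num
  split
  · rename_i h
    rw [h2s, h, _root_.one_zpow]
    push_cast
    ring
  · rename_i h
    have hne : Q ^ 2 - 1 ≠ 0 := sub_ne_zero.mpr h
    have e1 : Q ^ (2 * (s + 1)) = Q ^ (2 * s) * Q ^ 2 := by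
      rw [mul_add, mul_one, zpow_add₀ hQ]
      norm_num
    have e2 : Q ^ (2 * s + 1) = Q ^ (2 * s) * Q := by
      rw [zpow_add₀ hQ, zpow_one]
    rw [e1, e2]
    field_simp
    ring

lemma gfun_step' (Q : ℂ) (hQ : Q ≠ 0) (s : ℤ) :
    gfun Q (s - 1) = gfun Q s - Q ^ (2 * s - 1) := by
  have := gfun_step Q hQ (s - 1)
  simp only [sub_add_cancel] at this
  rw [this]
  ring_nf

lemma zpow_sum' {Q : ℂ} (hQ : Q ≠ 0) {α : Type*} [DecidableEq α] (s : Finset α) (f : α → ℤ) :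
    ∏ k ∈ s, Q ^ (f k) = Q ^ (∑ k ∈ s, f k) := by
  induction s using Finset.induction with
  | empty => simp
  | insert a s h ih => rw [Finset.prod_insert h, Finset.sum_insert h, zpow_add₀ hQ, ih]

def epsz (a : Fin 2) : ℤ := if a = 0 then 1 else -1

def dpF (n : ℕ) (v : ℂ) (i k : Fin n) : Fin 2 → ℂ :=
  if k < i then (fun a => (v ^ 2) ^ (epsz a))
  else if k = i then (fun a => if a = 0 then 1 else 0)
  else (fun a => (v ^ 2) ^ (-(epsz a)))

def dmF (n : ℕ) (v : ℂ) (i k : Fin n) : Fin 2 → ℂ :=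
  if k < i then (fun a => (v ^ 2) ^ (epsz a))
  else if k = i then (fun a => if a = 0 then 0 else 1)
  else (fun a => (v ^ 2) ^ (-(epsz a)))

lemma dK_mul_dK (v : ℂ) (hv : v ≠ 0) :
    Matrix.diagonal (Kdiag v) * Matrix.diagonal (Kdiag v)
      = Matrix.diagonal (fun a => (v ^ 2) ^ (epsz a)) := by
  rw [Matrix.diagonal_mul_diagonal]
  have : (fun a => Kdiag v a * Kdiag v a) = fun a => (v ^ 2) ^ (epsz a) := by
    funext a
    fin_cases a <;> simp [Kdiag, epsz, _root_.zpow_neg] <;> ring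
  rw [this]

lemma dKi_mul_dKi (v : ℂ) (hv : v ≠ 0) :
    Matrix.diagonal (Kdiag v⁻¹) * Matrix.diagonal (Kdiag v⁻¹)
      = Matrix.diagonal (fun a => (v ^ 2) ^ (-(epsz a))) := by
  rw [Matrix.diagonal_mul_diagonal]
  have : (fun a => Kdiag v⁻¹ a * Kdiag v⁻¹ a) = fun a => (v ^ 2) ^ (-(epsz a)) := by
    funext a
    fin_cases a <;> simp [Kdiag, epsz, _root_.zpow_neg] <;> ring
  rw [this]

lemma sP_mul_sM : sigmaP * sigmaM = Matrix.diagonal (fun a : Fin 2 => if a = 0 then (1:ℂ) else 0) := by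
  ext a b; fin_cases a <;> fin_cases b <;>
    simp [sigmaP, sigmaM, Matrix.mul_apply, Fin.sum_univ_two, Matrix.diagonal]

lemma sM_mul_sP : sigmaM * sigmaP = Matrix.diagonal (fun a : Fin 2 => if a = 0 then (0:ℂ) else 1) := by
  ext a b; fin_cases a <;> fin_cases b <;>
    simp [sigmaP, sigmaM, Matrix.mul_apply, Fin.sum_univ_two, Matrix.diagonal]

lemma TpTm_eq (n : ℕ) (v : ℂ) (hv : v ≠ 0) (i : Fin n) :
    siteOp n v sigmaP i * siteOp n v sigmaM i
      = tens (fun k => Matrix.diagonal (dpF n v i k)) := by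
  rw [siteOp_eq_tens, siteOp_eq_tens, tens_mul]
  have hfam : (fun k => locOf n v sigmaP i k * locOf n v sigmaM i k)
      = fun k => Matrix.diagonal (dpF n v i k) := by
    funext k
    unfold locOf dpF
    by_cases h2 : k = i
    · subst h2
      rw [if_neg (lt_irrefl k), if_neg (lt_irrefl k), if_neg (lt_irrefl k),
        if_pos rfl, if_pos rfl, if_pos rfl]
      exact sP_mul_sM
    · by_cases h1 : k < i
      · rw [if_pos h1, if_pos h1, if_pos h1]; exact dK_mul_dK v hv
      · rw [if_neg h1, if_neg h1, if_neg h1, if_neg h2, if_neg h2, if_neg h2]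
        exact dKi_mul_dKi v hv
  rw [hfam]

lemma TmTp_eq (n : ℕ) (v : ℂ) (hv : v ≠ 0) (i : Fin n) :
    siteOp n v sigmaM i * siteOp n v sigmaP i
      = tens (fun k => Matrix.diagonal (dmF n v i k)) := by
  rw [siteOp_eq_tens, siteOp_eq_tens, tens_mul]
  have hfam : (fun k => locOf n v sigmaM i k * locOf n v sigmaP i k)
      = fun k => Matrix.diagonal (dmF n v i k) := by
    funext k
    unfold locOf dmF
    by_cases h2 : k = i
    · subst h2
      rw [if_neg (lt_irrefl k), if_neg (lt_irrefl k), if_neg (lt_irrefl k),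
        if_pos rfl, if_pos rfl, if_pos rfl]
      exact sM_mul_sP
    · by_cases h1 : k < i
      · rw [if_pos h1, if_pos h1, if_pos h1]; exact dK_mul_dK v hv
      · rw [if_neg h1, if_neg h1, if_neg h1, if_neg h2, if_neg h2, if_neg h2]
        exact dKi_mul_dKi v hv
  rw [hfam]

lemma tens_diag {n : ℕ} (d : Fin n → Fin 2 → ℂ) :
    tens (fun k => Matrix.diagonal (d k)) = Matrix.diagonal (fun x : Spins n => ∏ k, d k (x k)) := by
  ext x y
  by_cases h : x = y
  · subst h
    simp [tens, Matrix.diagonal]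
  · obtain ⟨k0, hk0⟩ := Function.ne_iff.mp h
    rw [Matrix.diagonal_apply_ne _ h]
    exact Finset.prod_eq_zero (mem_univ k0) (Matrix.diagonal_apply_ne _ hk0)

def epsF {n : ℕ} (x : Spins n) (t : ℕ) : ℤ := if ht : t < n then epsz (x ⟨t, ht⟩) else 0
def Sf {n : ℕ} (x : Spins n) (t : ℕ) : ℤ := ∑ j ∈ Finset.range t, epsF x j

lemma epsF_val {n : ℕ} (x : Spins n) (k : Fin n) : epsF x k.val = epsz (x k) := by
  simp [epsF, k.isLt]

lemma Sf_succ {n : ℕ} (x : Spins n) (t : ℕ) : Sf x (t + 1) = Sf x t + epsF x t := by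
  unfold Sf; rw [Finset.sum_range_succ]

lemma wt_eq_Sf {n : ℕ} (x : Spins n) : wt x = Sf x n := by
  unfold wt Sf
  have h : ∀ k : Fin n, (if x k = 0 then (1:ℤ) else -1) = epsF x k.val := by
    intro k; rw [epsF_val]; rfl
  rw [Finset.sum_congr rfl (fun k _ => h k), Fin.sum_univ_eq_sum_range (epsF x) n]

lemma sum_if_lt {n : ℕ} (x : Spins n) (m : ℕ) (hm : m ≤ n) :
    ∑ t ∈ Finset.range n, (if t < m then epsF x t else 0) = Sf x m := by
  unfold Sf
  rw [← Finset.sum_subset (Finset.range_subset_range.mpr hm)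
    (fun t _ htm => by rw [if_neg (by simpa using htm)])]
  exact Finset.sum_congr rfl fun t ht => if_pos (Finset.mem_range.mp ht)

lemma diag_sum (n : ℕ) (v : ℂ) (hv : v ≠ 0) (x : Spins n) :
    ∑ i : Fin n, (∏ k, dpF n v i k (x k) - ∏ k, dmF n v i k (x k)) = hfun (v ^ 2) (wt x) := by
  have hQ : (v : ℂ) ^ 2 ≠ 0 := pow_ne_zero _ hv
  set Q : ℂ := v ^ 2 with hQdef
  have key : ∀ i : Fin n, (∏ k, dpF n v i k (x k) - ∏ k, dmF n v i k (x k))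
      = Q ^ (-(Sf x n)) * (gfun Q (Sf x (i.val + 1)) - gfun Q (Sf x i.val)) := by
    intro i
    rw [← Finset.mul_prod_erase univ (fun k => dpF n v i k (x k)) (mem_univ i),
        ← Finset.mul_prod_erase univ (fun k => dmF n v i k (x k)) (mem_univ i)]
    have hcomm : ∀ k ∈ univ.erase i, dpF n v i k (x k) = dmF n v i k (x k) := by
      intro k hk
      have hki := (Finset.mem_erase.mp hk).1
      unfold dpF dmF
      by_cases h1 : k < i
      · rw [if_pos h1, if_pos h1]
      · rw [if_neg h1, if_neg h1, if_neg hki, if_neg hki]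
    rw [Finset.prod_congr rfl hcomm, ← sub_mul]
    have hR : ∏ k ∈ univ.erase i, dmF n v i k (x k)
        = Q ^ (∑ k ∈ univ.erase i, (if k < i then epsz (x k) else -(epsz (x k)))) := by
      rw [← zpow_sum' hQ]
      apply Finset.prod_congr rfl
      intro k hk
      have hki := (Finset.mem_erase.mp hk).1
      unfold dmF
      by_cases h1 : k < i
      · rw [if_pos h1, if_pos h1]
      · rw [if_neg h1, if_neg hki, if_neg h1]
    rw [hR]
    have hexp : ∑ k ∈ univ.erase i, (if k < i then epsz (x k) else -(epsz (x k)))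
        = 2 * Sf x i.val + epsF x i.val - Sf x n := by
      have h1 : ∑ k ∈ univ.erase i, (if k < i then epsz (x k) else -(epsz (x k)))
          = (∑ k : Fin n, (if k < i then epsz (x k) else -(epsz (x k))))
            - (if i < i then epsz (x i) else -(epsz (x i))) := by
        rw [← Finset.add_sum_erase univ _ (mem_univ i)]; ring
      have h2 : ∑ k : Fin n, (if k < i then epsz (x k) else -(epsz (x k)))
          = ∑ t ∈ Finset.range n, (if t < i.val then epsF x t else -(epsF x t)) := by
        rw [← Fin.sum_univ_eq_sum_range (fun t => if t < i.val then epsF x t else -(epsF x t)) n]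
        apply Finset.sum_congr rfl
        intro k _
        simp only [epsF_val, Fin.lt_def]
      have h3 : ∀ t : ℕ, (if t < i.val then epsF x t else -(epsF x t))
          = 2 * (if t < i.val then epsF x t else 0) - epsF x t := by
        intro t; by_cases h : t < i.val <;> simp [h] <;> ring
      rw [h1, h2, Finset.sum_congr rfl (fun t _ => h3 t), Finset.sum_sub_distrib,
        ← Finset.mul_sum, sum_if_lt x i.val (le_of_lt i.isLt), if_neg (lt_irrefl i)]
      unfold Sf
      rw [epsF_val]
      ring
    rw [hexp]
    have hei : epsF x i.val = epsz (x i) := epsF_val x i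
    have hsign : dpF n v i i (x i) - dmF n v i i (x i)
        = ((epsz (x i) : ℤ) : ℂ) := by
      unfold dpF dmF
      rw [if_neg (lt_irrefl i), if_pos rfl, if_neg (lt_irrefl i), if_pos rfl]
      unfold epsz
      by_cases h : x i = 0 <;> simp [h]
    rw [hsign, Sf_succ, hei]
    by_cases h : x i = 0
    · rw [show epsz (x i) = 1 from by simp [epsz, h]]
      rw [gfun_step Q hQ]
      push_cast
      rw [show (2 : ℤ) * Sf x i.val + 1 - Sf x n = (2 * Sf x i.val + 1) + (-(Sf x n)) from by ring,
        zpow_add₀ hQ]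
      ring
    · rw [show epsz (x i) = -1 from by simp [epsz, h]]
      rw [show Sf x i.val + (-1 : ℤ) = Sf x i.val - 1 from by ring, gfun_step' Q hQ]
      push_cast
      rw [show (2 : ℤ) * Sf x i.val + -1 - Sf x n = (2 * Sf x i.val - 1) + (-(Sf x n)) from by ring,
        zpow_add₀ hQ]
      ring
  rw [Finset.sum_congr rfl (fun i _ => key i),
    Fin.sum_univ_eq_sum_range (fun t => Q ^ (-(Sf x n)) * (gfun Q (Sf x (t + 1)) - gfun Q (Sf x t))) n,
    ← Finset.mul_sum, Finset.sum_range_sub (fun t => gfun Q (Sf x t))]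
  unfold hfun
  rw [wt_eq_Sf]
  have : Sf x 0 = 0 := by simp [Sf]
  rw [this, gfun_zero, sub_zero]

lemma comm_eq_Dg (n : ℕ) (v : ℂ) (hv : v ≠ 0) :
    SpOp n v * SmOp n v - SmOp n v * SpOp n v = Dg (hfun (v ^ 2)) := by
  unfold SpOp SmOp
  rw [Finset.sum_mul_sum, Finset.sum_mul_sum]
  rw [Finset.sum_comm (s := univ) (t := univ)
    (f := fun j i => siteOp n v sigmaM j * siteOp n v sigmaP i)]
  rw [← Finset.sum_sub_distrib]
  have hstep : ∀ i : Fin n,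
      ((∑ j, siteOp n v sigmaP i * siteOp n v sigmaM j)
        - (∑ j, siteOp n v sigmaM j * siteOp n v sigmaP i))
      = siteOp n v sigmaP i * siteOp n v sigmaM i - siteOp n v sigmaM i * siteOp n v sigmaP i := by
    intro i
    rw [← Finset.sum_sub_distrib]
    rw [Finset.sum_eq_single i]
    · intro j _ hji
      rw [cross_comm n v hv i j (Ne.symm hji), sub_self]
    · intro h; exact absurd (mem_univ i) h
  rw [Finset.sum_congr rfl (fun i _ => hstep i)]
  have hterm : ∀ i : Fin n,
      siteOp n v sigmaP i * siteOp n v sigmaM i - siteOp n v sigmaM i * siteOp n v sigmaP i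
      = Matrix.diagonal (fun x : Spins n => ∏ k, dpF n v i k (x k) - ∏ k, dmF n v i k (x k)) := by
    intro i
    rw [TpTm_eq n v hv i, TmTp_eq n v hv i, tens_diag, tens_diag, Matrix.diagonal_sub]
  rw [Finset.sum_congr rfl (fun i _ => hterm i)]
  ext x y
  rw [Matrix.sum_apply]
  unfold Dg
  by_cases h : x = y
  · subst h
    rw [Matrix.diagonal_apply_eq]
    simp only [Matrix.diagonal_apply_eq]
    exact diag_sum n v hv x
  · rw [Matrix.diagonal_apply_ne _ h]
    simp [Matrix.diagonal_apply_ne _ h]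

lemma Dg_add {n : ℕ} (f g : ℤ → ℂ) :
    (Dg f : Matrix (Spins n) (Spins n) ℂ) + Dg g = Dg (fun m => f m + g m) := by
  unfold Dg
  rw [Matrix.diagonal_add]

lemma X_Dg (n : ℕ) (v : ℂ) (f : ℤ → ℂ) :
    Dg f * (SmOp n v * SpOp n v) = (SmOp n v * SpOp n v) * Dg f := by
  rw [← mul_assoc, Dg_mul_Sm, mul_assoc, Dg_mul_Sp, ← mul_assoc]
  have : (fun m => f (m + 2 - 2)) = f := by funext m; norm_num
  rw [this]

lemma EF_eq (n : ℕ) (v : ℂ) (hv : v ≠ 0) :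
    SpOp n v * SmOp n v = SmOp n v * SpOp n v + Dg (hfun (v ^ 2)) := by
  rw [← comm_eq_Dg n v hv]; abel

lemma X_mul_E (n : ℕ) (v : ℂ) (hv : v ≠ 0) :
    (SmOp n v * SpOp n v) * SpOp n v
      = SpOp n v * ((SmOp n v * SpOp n v) - Dg (fun m => hfun (v ^ 2) (m + 2))) := by
  have h1 : SpOp n v * (SmOp n v * SpOp n v)
      = (SmOp n v * SpOp n v) * SpOp n v + Dg (hfun (v ^ 2)) * SpOp n v := by
    rw [← mul_assoc, EF_eq n v hv, add_mul]
  have h2 : Dg (hfun (v ^ 2)) * SpOp n v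
      = SpOp n v * Dg (fun m => hfun (v ^ 2) (m + 2)) := Dg_mul_Sp v _
  rw [h2] at h1
  rw [mul_sub, h1]
  abel

def caF (q : ℂ) (a : ℕ) : ℤ → ℂ := fun m => ∑ j ∈ Finset.range a, hfun q (m + 2 * (j + 1))

lemma caF_succ (q : ℂ) (a : ℕ) :
    caF q (a + 1) = fun m => hfun q (m + 2) + caF q a (m + 2) := by
  funext m
  unfold caF
  rw [Finset.sum_range_succ']
  have h1 : ∀ j ∈ Finset.range a, hfun q (m + 2 * ((↑(j + 1) : ℤ) + 1))
      = hfun q (m + 2 + 2 * ((j : ℤ) + 1)) := by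
    intro j _; congr 1; push_cast; ring
  rw [Finset.sum_congr rfl h1]
  have h0 : m + 2 * ((↑(0 : ℕ) : ℤ) + 1) = m + 2 := by push_cast; ring
  rw [h0]
  exact add_comm _ _

lemma X_mul_Epow (n : ℕ) (v : ℂ) (hv : v ≠ 0) (a : ℕ) :
    (SmOp n v * SpOp n v) * SpOp n v ^ a
      = SpOp n v ^ a * ((SmOp n v * SpOp n v) - Dg (caF (v ^ 2) a)) := by
  induction a with
  | zero =>
      simp only [pow_zero, one_mul, mul_one]
      have : caF (v ^ 2) 0 = fun _ => 0 := by funext m; simp [caF]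
      rw [this]
      have : (Dg (fun _ => (0:ℂ)) : Matrix (Spins n) (Spins n) ℂ) = 0 := by
        unfold Dg; simp [Matrix.diagonal_zero]
      rw [this, sub_zero]
  | succ a ih =>
      rw [pow_succ, ← mul_assoc, ih, mul_assoc, mul_assoc]
      congr 1
      rw [sub_mul, X_mul_E n v hv, Dg_mul_Sp v (caF (v ^ 2) a), ← mul_sub, caF_succ,
        sub_sub, Dg_add]

def Pmat (n : ℕ) (v : ℂ) : ℕ → Matrix (Spins n) (Spins n) ℂ
  | 0 => 1
  | a + 1 => Pmat n v a * ((SmOp n v * SpOp n v) - Dg (caF (v ^ 2) a))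

lemma FE_pow (n : ℕ) (v : ℂ) (hv : v ≠ 0) (a : ℕ) :
    SmOp n v ^ a * SpOp n v ^ a = Pmat n v a := by
  induction a with
  | zero => simp [Pmat]
  | succ a ih =>
      rw [Pmat, ← ih]
      rw [pow_succ, pow_succ']
      calc SmOp n v ^ a * SmOp n v * (SpOp n v * SpOp n v ^ a)
          = SmOp n v ^ a * ((SmOp n v * SpOp n v) * SpOp n v ^ a) := by
            rw [mul_assoc, ← mul_assoc (SmOp n v) (SpOp n v) (SpOp n v ^ a)]
        _ = SmOp n v ^ a * (SpOp n v ^ a * ((SmOp n v * SpOp n v) - Dg (caF (v ^ 2) a))) := by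
            rw [X_mul_Epow n v hv a]
        _ = SmOp n v ^ a * SpOp n v ^ a * ((SmOp n v * SpOp n v) - Dg (caF (v ^ 2) a)) := by
            rw [← mul_assoc]

lemma factor_comm (n : ℕ) (v : ℂ) (f g : ℤ → ℂ) :
    Commute ((SmOp n v * SpOp n v) - Dg f) ((SmOp n v * SpOp n v) - Dg g) := by
  unfold Commute SemiconjBy
  have h1 := X_Dg n v f
  have h2 := X_Dg n v g
  have h3 := Dg_comm (n := n) f g
  set X := SmOp n v * SpOp n v
  simp only [mul_sub, sub_mul, h1, h2, h3]
  abel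

lemma Pmat_comm_factor (n : ℕ) (v : ℂ) (a : ℕ) (g : ℤ → ℂ) :
    Commute (Pmat n v a) ((SmOp n v * SpOp n v) - Dg g) := by
  induction a with
  | zero => exact Commute.one_left _
  | succ a ih => exact Commute.mul_left ih (factor_comm n v _ g)

lemma Pmat_comm (n : ℕ) (v : ℂ) (a b : ℕ) : Commute (Pmat n v a) (Pmat n v b) := by
  induction b with
  | zero => exact Commute.one_right _
  | succ b ih => exact Commute.mul_right ih (Pmat_comm_factor n v a _)


/-- the operators `(S^−)^a (S^+)^a` and `(S^−)^b (S^+)^b` commute. -/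
theorem stmt4 (n : ℕ) (hn : 1 ≤ n) (v : ℂ) (hv : v ≠ 0) (a b : ℕ) :
    (SmOp n v ^ a * SpOp n v ^ a) * (SmOp n v ^ b * SpOp n v ^ b) =
    (SmOp n v ^ b * SpOp n v ^ b) * (SmOp n v ^ a * SpOp n v ^ a) := by
  rw [FE_pow n v hv a, FE_pow n v hv b]
  exact Pmat_comm n v a b

end
end

section
/- Let q be generic, let M be a nonnegative integer, and let i ≥ 1 be an integer. Then Σ_{r=0}^{i} (−1)^r [M+2r+1] [i choose r] [i+M+r+1 choose i+1]^{−1} = 0. (With M = 2m and j = m + r this reads Σ_{j=m}^{m+i} (−1)^{j−m} [2j+1] [i choose j−m] [i+j+m+1 choose i+1]^{−1} = 0.) -/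
open Matrix Filter Topology BigOperators Finset

noncomputable section

section Aux

variable {q : ℂ}

lemma aux_qNum_zero : qNum q 0 = 0 := by simp [qNum]

lemma aux_sub_inv_ne (hq : Generic q) : q - q⁻¹ ≠ 0 := by
  obtain ⟨h0, h1⟩ := hq
  intro h
  have hqq : q = q⁻¹ := by linear_combination h
  have : q ^ 2 = 1 := by
    rw [pow_two]
    nth_rewrite 2 [hqq]
    exact mul_inv_cancel₀ h0
  exact h1 2 (by norm_num) this

lemma aux_qNum_ne (hq : Generic q) (k : ℕ) (hk : 0 < k) : qNum q (k : ℤ) ≠ 0 := by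
  obtain ⟨h0, h1⟩ := hq
  have hden := aux_sub_inv_ne ⟨h0, h1⟩
  have hnum : q ^ (k : ℤ) - q ^ (-(k : ℤ)) ≠ 0 := by
    intro h
    have heq : q ^ (k : ℤ) = q ^ (-(k : ℤ)) := by linear_combination h
    have hk2 : q ^ (2 * k) = 1 := by
      have h2 : q ^ (k : ℤ) * q ^ (-(k : ℤ)) = 1 := by
        rw [← zpow_add₀ h0]; simp
      calc q ^ (2 * k) = q ^ (k : ℤ) * q ^ (k : ℤ) := by
            rw [two_mul, pow_add, ← zpow_natCast q k]
        _ = q ^ (k : ℤ) * q ^ (-(k : ℤ)) := by rw [heq]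
        _ = 1 := h2
    exact h1 (2 * k) (by omega) hk2
  exact div_ne_zero hnum hden

lemma aux_qFact_ne (hq : Generic q) (k : ℕ) : qFact q k ≠ 0 := by
  induction k with
  | zero => simp [qFact]
  | succ n ih =>
    have := aux_qNum_ne hq (n + 1) (by omega)
    push_cast at this
    exact mul_ne_zero this ih

lemma aux_qBinom_eq (n k : ℕ) (h : k ≤ n) :
    qBinom q (n : ℤ) (k : ℤ) = qFact q n / (qFact q k * qFact q (n - k)) := by
  rw [qBinom, if_pos ⟨by positivity, by exact_mod_cast h⟩]
  have e : ((n : ℤ) - (k : ℤ)) = ((n - k : ℕ) : ℤ) := by omega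
  rw [e]
  simp

lemma aux_qBinom_ne (hq : Generic q) (n k : ℕ) (h : k ≤ n) :
    qBinom q (n : ℤ) (k : ℤ) ≠ 0 := by
  rw [aux_qBinom_eq n k h]
  exact div_ne_zero (aux_qFact_ne hq n) (mul_ne_zero (aux_qFact_ne hq k) (aux_qFact_ne hq (n - k)))

lemma aux_qBinom_neg (n : ℤ) {k : ℤ} (hk : k < 0) : qBinom q n k = 0 := by
  rw [qBinom, if_neg]; omega

lemma aux_qBinom_gt {n k : ℤ} (hk : n < k) : qBinom q n k = 0 := by
  rw [qBinom, if_neg]; omega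

lemma aux_key (hq : Generic q) (A B C : ℤ) :
    qNum q (A + B) * qNum q C = qNum q A * qNum q (C - B) + qNum q B * qNum q (C + A) := by
  have hden := aux_sub_inv_ne hq
  obtain ⟨h0, _⟩ := hq
  unfold qNum
  field_simp
  simp only [zpow_add₀ h0, zpow_sub₀ h0, _root_.zpow_neg, _root_.mul_inv]
  have ha : q ^ A ≠ 0 := zpow_ne_zero _ h0
  have hb : q ^ B ≠ 0 := zpow_ne_zero _ h0
  have hc : q ^ C ≠ 0 := zpow_ne_zero _ h0
  field_simp
  ring

/-- `[n+1 choose k]·[n+1-k] = [n+1]·[n choose k]` -/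
lemma aux_L2 (hq : Generic q) (n k : ℕ) (h : k ≤ n + 1) :
    qBinom q ((n : ℤ) + 1) (k : ℤ) * qNum q ((n : ℤ) + 1 - k) =
      qNum q ((n : ℤ) + 1) * qBinom q (n : ℤ) (k : ℤ) := by
  rcases eq_or_lt_of_le h with rfl | hlt
  · rw [aux_qBinom_gt (show (n : ℤ) < ((n + 1 : ℕ) : ℤ) by push_cast; omega)]
    rw [show ((n : ℤ) + 1 - ((n + 1 : ℕ) : ℤ)) = 0 by push_cast; ring, aux_qNum_zero]
    ring
  · have hkn : k ≤ n := by omega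
    have e1 : ((n : ℤ) + 1) = ((n + 1 : ℕ) : ℤ) := by omega
    have e2 : ((n : ℤ) + 1 - k) = ((n + 1 - k : ℕ) : ℤ) := by omega
    rw [e2, e1, aux_qBinom_eq (n + 1) k (by omega), aux_qBinom_eq n k hkn]
    have e3 : n + 1 - k = (n - k) + 1 := by omega
    have e4 : qFact q ((n - k) + 1) = qNum q ((n - k : ℕ) + 1) * qFact q (n - k) := rfl
    have e5 : qFact q (n + 1) = qNum q ((n : ℕ) + 1) * qFact q n := rfl
    rw [e3, e4, e5]
    push_cast
    have f1 := aux_qFact_ne hq n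
    have f2 := aux_qFact_ne hq k
    have f3 := aux_qFact_ne hq (n - k)
    have f4 := aux_qNum_ne hq (n + 1 - k) (by omega)
    push_cast [Nat.cast_sub (show k ≤ n + 1 by omega)] at f4
    ring_nf at f4
    ring_nf
    have f5 : qNum q (1 + ((n - k : ℕ) : ℤ)) ≠ 0 := by
      have := aux_qNum_ne hq (n - k + 1) (by omega)
      push_cast at this
      rwa [add_comm]
    field_simp [f1, f2, f3, f4, f5]

/-- `[n+1 choose k]·[k] = [n+1]·[n choose k-1]` -/
lemma aux_L1 (hq : Generic q) (n k : ℕ) (h : k ≤ n + 1) :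
    qBinom q ((n : ℤ) + 1) (k : ℤ) * qNum q (k : ℤ) =
      qNum q ((n : ℤ) + 1) * qBinom q (n : ℤ) ((k : ℤ) - 1) := by
  rcases Nat.eq_zero_or_pos k with rfl | hk
  · rw [aux_qBinom_neg (n : ℤ) (by norm_num : ((0:ℕ):ℤ) - 1 < 0)]
    push_cast
    rw [aux_qNum_zero]
    ring
  · obtain ⟨k', rfl⟩ : ∃ k', k = k' + 1 := ⟨k - 1, by omega⟩
    have hkn : k' ≤ n := by omega
    have e1 : ((n : ℤ) + 1) = ((n + 1 : ℕ) : ℤ) := by omega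
    have e2 : ((k' + 1 : ℕ) : ℤ) - 1 = ((k' : ℕ) : ℤ) := by omega
    rw [e1, e2, aux_qBinom_eq (n + 1) (k' + 1) (by omega), aux_qBinom_eq n k' hkn]
    have e3 : n + 1 - (k' + 1) = n - k' := by omega
    have e5 : qFact q (n + 1) = qNum q ((n : ℕ) + 1) * qFact q n := rfl
    have e4 : qFact q (k' + 1) = qNum q ((k' : ℕ) + 1) * qFact q k' := rfl
    rw [e3, e5, e4]
    push_cast
    have f1 := aux_qFact_ne hq n
    have f2 := aux_qFact_ne hq k'
    have f3 := aux_qFact_ne hq (n - k')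
    have f4 := aux_qNum_ne hq (k' + 1) (by omega)
    push_cast at f4
    field_simp [f1, f2, f3, f4]

end Aux

section Main2

variable {q : ℂ}

lemma aux_qBinom_zero (hq : Generic q) (n : ℕ) : qBinom q (n : ℤ) 0 = 1 := by
  have h0 : ((0:ℕ):ℤ) = 0 := rfl
  rw [← h0, aux_qBinom_eq n 0 (by omega)]
  simp [qFact, div_self (aux_qFact_ne hq n)]

def auxH (q : ℂ) (M j : ℕ) (s : ℕ) : ℂ :=
  (-1 : ℂ) ^ (s + 1) * qNum q ((M : ℤ) + s) * qBinom q (j : ℤ) ((s : ℤ) - 1) *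
    (qBinom q ((j : ℤ) + M + s + 1) ((j : ℤ) + 2))⁻¹

lemma auxH_zero (q : ℂ) (M j : ℕ) : auxH q M j 0 = 0 := by
  unfold auxH
  rw [aux_qBinom_neg (j : ℤ) (by norm_num : ((0:ℕ):ℤ) - 1 < 0)]
  ring

lemma auxH_top (q : ℂ) (M j : ℕ) : auxH q M j (j + 2) = 0 := by
  unfold auxH
  rw [aux_qBinom_gt (show (j : ℤ) < ((j + 2 : ℕ) : ℤ) - 1 by push_cast; omega)]
  ring

lemma aux_term (hq : Generic q) (M j : ℕ) (r : ℕ) (hr : r ≤ j + 1) :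
    (-1 : ℂ) ^ r * qNum q ((M : ℤ) + 2 * r + 1) * qBinom q ((j : ℤ) + 1) (r : ℤ) *
        (qBinom q ((j : ℤ) + 1 + M + r + 1) ((j : ℤ) + 1 + 1))⁻¹ =
      auxH q M j (r + 1) - auxH q M j r := by
  rcases Nat.eq_zero_or_pos r with rfl | hpos
  · rw [auxH_zero, sub_zero]
    unfold auxH
    push_cast
    norm_num
    rw [show ((j:ℤ)+1) = ((j+1:ℕ):ℤ) by push_cast; ring]
    rw [aux_qBinom_zero hq (j+1), aux_qBinom_zero hq j]
    push_cast
    ring_nf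
  · obtain ⟨t, rfl⟩ : ∃ t, r = t + 1 := ⟨r - 1, by omega⟩
    unfold auxH
    have ht : t ≤ j := by omega
    have hB := aux_qBinom_ne hq (j+M+t+3) (j+2) (by omega)
    have hB' := aux_qBinom_ne hq (j+M+t+2) (j+2) (by omega)
    have hI := aux_qNum_ne hq (j+1) (by omega)
    have key := aux_key hq ((M:ℤ)+t+2) ((t:ℤ)+1) ((j:ℤ)+1)
    have L2 := aux_L2 hq j (t+1) (by omega)
    have L1 := aux_L1 hq j (t+1) (by omega)
    have L3 := aux_L2 hq (j+M+t+2) (j+2) (by omega)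
    push_cast at hB hB' hI key L2 L1 L3 ⊢
    ring_nf at hB hB' hI key L2 L1 L3 ⊢
    apply mul_left_cancel₀ hI
    field_simp [hB, hB']
    apply mul_left_cancel₀ hI
    linear_combination (-(qBinom q (1+(j:ℤ)) (1+(t:ℤ)) * qBinom q (2+(j:ℤ)+M+t) (2+(j:ℤ)))) * key
      - qNum q (2+(M:ℤ)+t) * qBinom q (2+(j:ℤ)+M+t) (2+(j:ℤ)) * L2
      - qNum q (3+(j:ℤ)+M+t) * qBinom q (2+(j:ℤ)+M+t) (2+(j:ℤ)) * L1
      + qNum q (1+(j:ℤ)) * qBinom q (j:ℤ) (t:ℤ) * L3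

end Main2

/-- for generic `q`, `M ≥ 0` and `i ≥ 1`,
`Σ_{r=0}^{i} (−1)^r [M+2r+1] [i choose r] [i+M+r+1 choose i+1]⁻¹ = 0`. -/
theorem stmt8 (q : ℂ) (hq : Generic q) (M i : ℕ) (hi : 1 ≤ i) :
    ∑ r ∈ Finset.range (i + 1),
      (-1 : ℂ) ^ r * qNum q ((M : ℤ) + 2 * r + 1) * qBinom q (i : ℤ) (r : ℤ) *
        (qBinom q ((i : ℤ) + M + r + 1) ((i : ℤ) + 1))⁻¹ = 0 := by
  obtain ⟨j, rfl⟩ : ∃ j, i = j + 1 := ⟨i - 1, by omega⟩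
  have step : ∀ r ∈ Finset.range (j + 1 + 1),
      (-1 : ℂ) ^ r * qNum q ((M : ℤ) + 2 * r + 1) * qBinom q ((j + 1 : ℕ) : ℤ) (r : ℤ) *
        (qBinom q (((j + 1 : ℕ) : ℤ) + M + r + 1) (((j + 1 : ℕ) : ℤ) + 1))⁻¹ =
      auxH q M j (r + 1) - auxH q M j r := by
    intro r hr
    have hr' : r ≤ j + 1 := by simpa using Nat.lt_succ_iff.mp (Finset.mem_range.mp hr)
    have := aux_term hq M j r hr'
    push_cast at this ⊢
    convert this using 3
  rw [Finset.sum_congr rfl step, Finset.sum_range_sub (auxH q M j) (j + 1 + 1)]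
  rw [show j + 1 + 1 = j + 2 from rfl, auxH_top, auxH_zero, sub_zero]


end
end

section
/- Let q be generic and let J ≥ 0, k ≥ 1 and l be integers with 0 ≤ l < k. Then Σ_{r=0}^{l} (−1)^r [J+k+r]! / ([r]! [J+r+1]! [k−r]!) = (−1)^l [J+k+l+1]! / ([J+l+1]! [k−l−1]! [l]! [J+k+1] [k]). (Here J plays the role of 2j in the paper.) -/
open Matrix Filter Topology BigOperators Finset

noncomputable section

set_option maxHeartbeats 1000000

lemma aux_hden {q : ℂ} (hq : Generic q) : q - q⁻¹ ≠ 0 := by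
  obtain ⟨h0, h1⟩ := hq
  intro h
  apply h1 2 (by norm_num)
  have h' : q = q⁻¹ := sub_eq_zero.mp h
  calc q ^ 2 = q * q := sq q
    _ = q * q⁻¹ := by rw [← h']
    _ = 1 := mul_inv_cancel₀ h0

lemma aux_qNum_ne_zero {q : ℂ} (hq : Generic q) {n : ℤ} (hn : 0 < n) : qNum q n ≠ 0 := by
  obtain ⟨h0, h1⟩ := hq
  rw [qNum, div_ne_zero_iff]
  refine ⟨?_, aux_hden ⟨h0, h1⟩⟩
  intro h
  have h' : q ^ n = q ^ (-n) := sub_eq_zero.mp h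
  have : q ^ (2 * n) = 1 := by
    rw [two_mul, zpow_add₀ h0]
    nth_rewrite 2 [h']
    rw [← zpow_add₀ h0, add_neg_cancel, zpow_zero]
  have h2 : q ^ ((2 * n).toNat) = 1 := by
    rw [← zpow_natCast, Int.toNat_of_nonneg (by omega)]; exact this
  exact h1 _ (by omega) h2

lemma aux_qFact_ne_zero {q : ℂ} (hq : Generic q) (n : ℕ) : qFact q n ≠ 0 := by
  induction n with
  | zero => simp [qFact]
  | succ m ih =>
    rw [qFact]
    exact mul_ne_zero (aux_qNum_ne_zero hq (by positivity)) ih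

lemma aux_qNum_key {q : ℂ} (hq : Generic q) (a b c : ℤ) :
    qNum q a * qNum q b - qNum q (a-c) * qNum q (b-c) = qNum q c * qNum q (a+b-c) := by
  obtain ⟨h0, -⟩ := hq
  simp only [qNum, div_mul_div_comm, div_sub_div_same]
  congr 1
  have hA := zpow_ne_zero a h0
  have hB := zpow_ne_zero b h0
  have hC := zpow_ne_zero c h0
  simp only [neg_sub, neg_add_rev, zpow_add₀ h0, zpow_sub₀ h0, _root_.zpow_neg]
  field_simp
  ring

lemma aux_alg (x a b c d u v : ℂ) (ha : a≠0) (hb : b≠0) (hc : c≠0) (hd : d≠0) (hu : u≠0)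
    (key : a*b - c*d = u*v) :
    x*u⁻¹*a⁻¹*b⁻¹ - x*u⁻¹*c⁻¹*d⁻¹ = -(x*a⁻¹*b⁻¹*c⁻¹*d⁻¹*v) := by
  field_simp
  linear_combination (-x) * key

lemma aux_qFact_succ (q : ℂ) (n : ℕ) : qFact q (n+1) = qNum q ((n : ℤ)+1) * qFact q n := rfl

/-- for generic `q` and `0 ≤ l < k` (here `J = 2j`),
`Σ_{r=0}^{l} (−1)^r [J+k+r]!/([r]![J+r+1]![k−r]!)
  = (−1)^l [J+k+l+1]!/([J+l+1]![k−l−1]![l]![J+k+1][k])`. -/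
theorem stmt10 (q : ℂ) (hq : Generic q) (J k l : ℕ) (hk : 1 ≤ k) (hl : l < k) :
    ∑ r ∈ Finset.range (l + 1),
      (-1 : ℂ) ^ r * (qFact q (J + k + r) / (qFact q r * qFact q (J + r + 1) * qFact q (k - r))) =
    (-1 : ℂ) ^ l * (qFact q (J + k + l + 1) /
      (qFact q (J + l + 1) * qFact q (k - l - 1) * qFact q l *
        qNum q ((J : ℤ) + k + 1) * qNum q (k : ℤ))) := by
  revert hl
  have hF := aux_qFact_ne_zero hq
  have hN : ∀ m : ℤ, 0 < m → qNum q m ≠ 0 := fun m hm => aux_qNum_ne_zero hq hm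
  induction l with
  | zero =>
    intro hl
    obtain ⟨m, rfl⟩ : ∃ m, k = m + 1 := ⟨k-1, by omega⟩
    rw [Finset.sum_range_one]
    have n1 : qNum q ((J:ℤ)+1) ≠ 0 := hN _ (by omega)
    have n2 : qNum q ((m:ℤ)+1) ≠ 0 := hN _ (by omega)
    simp only [pow_zero, one_mul, Nat.add_zero, Nat.zero_add, Nat.sub_zero,
      Nat.add_sub_cancel, Nat.add_succ]
    simp only [aux_qFact_succ, show qFact q 0 = 1 from rfl]
    push_cast
    rw [show ((J:ℤ)+(↑m+1)+1) = (↑J+↑m+1+1) by ring]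
    have n3' : qNum q ((J:ℤ)+↑m+1+1) ≠ 0 := hN _ (by omega)
    rw [div_eq_div_iff
      (mul_ne_zero (mul_ne_zero one_ne_zero (mul_ne_zero n1 (hF _))) (mul_ne_zero n2 (hF _)))
      (mul_ne_zero (mul_ne_zero (mul_ne_zero (mul_ne_zero (mul_ne_zero n1 (hF _)) (hF _)) one_ne_zero) n3') n2)]
    ring
  | succ n ih =>
    intro hl
    rw [Finset.sum_range_succ, ih (by omega)]
    obtain ⟨e, rfl⟩ : ∃ e, k = n + e + 2 := ⟨k - n - 2, by omega⟩
    simp only [show n+e+2-n-1 = e+1 by omega, show n+e+2-(n+1) = e+1 by omega,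
      show n+e+2-(n+1)-1 = e by omega,
      show J+(n+e+2)+(n+1)+1 = (J+n+n+e+3)+1 by omega,
      show J+(n+e+2)+(n+1) = (J+n+n+e+2)+1 by omega,
      show J+(n+e+2)+n+1 = (J+n+n+e+2)+1 by omega,
      show J+(n+1)+1 = (J+n+1)+1 by omega,
      show J+n+n+e+3 = (J+n+n+e+2)+1 by omega]
    simp only [aux_qFact_succ]
    push_cast
    ring_nf
    have h := aux_qNum_key hq ((J:ℤ)+↑n+↑e+3) ((n:ℤ)+↑e+2) ((e:ℤ)+1)
    rw [show ((J:ℤ)+↑n+↑e+3 - (↑e+1)) = 2+↑J+↑n by ring,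
      show ((n:ℤ)+↑e+2 - (↑e+1)) = 1+↑n by ring,
      show ((J:ℤ)+↑n+↑e+3 + (↑n+↑e+2) - (↑e+1)) = 4+↑J+↑n*2+↑e by ring,
      show ((J:ℤ)+↑n+↑e+3) = 3+↑J+↑n+↑e by ring,
      show ((n:ℤ)+↑e+2) = 2+↑n+↑e by ring,
      show ((e:ℤ)+1) = 1+↑e by ring] at h
    have za : qNum q (3+(J:ℤ)+↑n+↑e) ≠ 0 := hN _ (by omega)
    have zb : qNum q (2+(n:ℤ)+↑e) ≠ 0 := hN _ (by omega)
    have zc : qNum q (2+(J:ℤ)+↑n) ≠ 0 := hN _ (by omega)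
    have zd : qNum q (1+(n:ℤ)) ≠ 0 := hN _ (by omega)
    have zu : qNum q (1+(e:ℤ)) ≠ 0 := hN _ (by omega)
    have h2 := aux_alg
      (qNum q (3+↑J+↑n*2+↑e) * qNum q (2+↑J+↑n*2+↑e) * qNum q (1+↑J+↑n*2+↑e) *
        qFact q (n*2+J+e) * (qNum q (1+↑J+↑n))⁻¹ * (qFact q (n+J))⁻¹ * (qFact q e)⁻¹ *
        (qFact q n)⁻¹ * (-1:ℂ)^n)
      (qNum q (3+↑J+↑n+↑e)) (qNum q (2+↑n+↑e)) (qNum q (2+↑J+↑n)) (qNum q (1+↑n))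
      (qNum q (1+↑e)) (qNum q (4+↑J+↑n*2+↑e))
      za zb zc zd zu (by linear_combination h)
    linear_combination h2


end
end

section
/- Let q be generic and let M ≥ 0, i ≥ 1 and l be integers with 0 ≤ l < i. Then Σ_{r=0}^{l} (−1)^r [M+r]! [M+2r+1] / ([r]! [i−r]! [M+r+i+1]!) = (−1)^l [M+l+1]! / ([M+i+l+1]! [i−l−1]! [l]! [i]). (Here M plays the role of 2m in the paper.) -/
open Matrix Filter Topology BigOperators Finset

noncomputable section

lemma qFact_zero (q : ℂ) : qFact q 0 = 1 := rfl
lemma qFact_succ (q : ℂ) (k : ℕ) : qFact q (k+1) = qNum q (k+1) * qFact q k := rfl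

lemma sub_inv_ne (q : ℂ) (hq : Generic q) : q - q⁻¹ ≠ 0 := by
  obtain ⟨h0, h1⟩ := hq
  intro h
  apply h1 2 (by norm_num)
  have := sub_eq_zero.mp h
  field_simp at this
  exact this

lemma qNum_ne (q : ℂ) (hq : Generic q) (k : ℕ) (hk : 0 < k) : qNum q (k : ℤ) ≠ 0 := by
  obtain ⟨h0, h1⟩ := hq
  unfold qNum
  rw [div_ne_zero_iff]
  refine ⟨?_, sub_inv_ne q ⟨h0, h1⟩⟩
  rw [sub_ne_zero]
  intro h
  apply h1 (2*k) (by omega)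
  have : (q ^ (k:ℤ)) * (q ^ (k:ℤ)) = q ^ (k:ℤ) * q ^ (-(k:ℤ)) := by rw [h]
  rw [← zpow_add₀ h0, ← zpow_add₀ h0] at this
  simpa [pow_mul, sq, ← zpow_natCast, ← zpow_add₀ h0, two_mul] using this

lemma qFact_ne (q : ℂ) (hq : Generic q) (k : ℕ) : qFact q k ≠ 0 := by
  induction k with
  | zero => rw [qFact_zero]; exact one_ne_zero
  | succ n ih =>
    rw [qFact_succ]
    exact mul_ne_zero (by exact_mod_cast qNum_ne q hq (n+1) (by omega)) ih

lemma key (q : ℂ) (hq : Generic q) (a b c : ℤ) :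
    qNum q (a+1) * qNum q (c+b+a+2) + qNum q (b-a-1) * qNum q (c+a+2)
      = qNum q b * qNum q (c+2*a+3) := by
  obtain ⟨h0, _⟩ := hq
  have h2 : q ^ (2:ℤ) = q * q := by rw [show (2:ℤ) = 1+1 from rfl, zpow_add₀ h0, zpow_one]
  have h3 : q ^ (3:ℤ) = q * q * q := by
    rw [show (3:ℤ) = 2+1 from rfl, zpow_add₀ h0, zpow_one, h2]
  have main : (q^(a+1) - q^(-(a+1))) * (q^(c+b+a+2) - q^(-(c+b+a+2)))
      + (q^(b-a-1) - q^(-(b-a-1))) * (q^(c+a+2) - q^(-(c+a+2)))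
      = (q^b - q^(-b)) * (q^(c+2*a+3) - q^(-(c+2*a+3))) := by
    have hz : ∀ n : ℤ, q ^ n ≠ 0 := fun n => zpow_ne_zero n h0
    simp only [neg_add, neg_sub, sub_eq_add_neg, two_mul] at *
    simp only [zpow_add₀ h0, _root_.zpow_neg, h2, h3, zpow_one]
    field_simp
    ring
  unfold qNum
  rw [div_mul_div_comm, div_mul_div_comm, div_mul_div_comm, ← add_div, main]

/-- for generic `q` and `0 ≤ l < i` (here `M = 2m`),
`Σ_{r=0}^{l} (−1)^r [M+r]![M+2r+1]/([r]![i−r]![M+r+i+1]!)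
  = (−1)^l [M+l+1]!/([M+i+l+1]![i−l−1]![l]![i])`. -/
theorem stmt11 (q : ℂ) (hq : Generic q) (M i l : ℕ) (hi : 1 ≤ i) (hl : l < i) :
    ∑ r ∈ Finset.range (l + 1),
      (-1 : ℂ) ^ r * (qFact q (M + r) * qNum q ((M : ℤ) + 2 * r + 1) /
        (qFact q r * qFact q (i - r) * qFact q (M + r + i + 1))) =
    (-1 : ℂ) ^ l * (qFact q (M + l + 1) /
      (qFact q (M + i + l + 1) * qFact q (i - l - 1) * qFact q l * qNum q (i : ℤ))) := by
  induction l with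
  | zero =>
    rw [Finset.sum_range_one]
    have e1 : qFact q (M + 0 + 1) = qNum q (M+1) * qFact q (M + 0) := qFact_succ q (M+0)
    have e2 : qFact q (i - 0) = qNum q i * qFact q (i - 0 - 1) := by
      have : i - 0 = (i - 0 - 1) + 1 := by omega
      rw [this, qFact_succ]
      congr 2
      push_cast
      omega
    have e3 : M + i + 0 + 1 = M + 0 + i + 1 := by omega
    rw [e1, e2, e3]
    have h1 := qFact_ne q hq (M+0)
    have h2 := qFact_ne q hq (i-0-1)
    have h3 := qFact_ne q hq (M+0+i+1)
    have h4 := qFact_ne q hq 0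
    have h5 := qNum_ne q hq i (by omega)
    have h6 : qNum q ((M:ℤ) + 2*(0:ℕ) + 1) = qNum q (M+1) := by norm_num
    rw [h6]
    field_simp
  | succ n ih =>
    have hn : n < i := by omega
    rw [Finset.sum_range_succ, ih hn]
    have K := key q hq n i M
    -- normalize indices
    have e0 : i - n - 1 = i - (n+1) := by omega
    have e1 : M + (n+1) = M + n + 1 := by omega
    have e2 : M + n + 1 + i + 1 = M + i + n + 2 := by omega
    have e3 : M + i + (n+1) + 1 = M + i + n + 2 := by omega
    have e4 : M + n + 1 + 1 = M + n + 2 := by omega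
    have e5 : i - (n+1) - 1 = i - (n+2) := by omega
    rw [e0, e1, e2, e3, e4, e5]
    have f1 : qFact q (M + i + n + 2) = qNum q (M+i+n+2) * qFact q (M+i+n+1) :=
      qFact_succ q (M+i+n+1)
    have f2 : qFact q (n+1) = qNum q (n+1) * qFact q n := qFact_succ q n
    have f3 : qFact q (M+n+2) = qNum q (M+n+2) * qFact q (M+n+1) := qFact_succ q (M+n+1)
    have f4 : qFact q (i-(n+1)) = qNum q (↑i - ↑n - 1) * qFact q (i-(n+2)) := by
      have h : i - (n+1) = (i - (n+2)) + 1 := by omega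
      rw [h, qFact_succ]
      congr 2
      push_cast
      omega
    rw [f1, f2, f3, f4]
    have hc1 : ((n:ℤ)+1 : ℤ) = ((n+1 : ℕ) : ℤ) := by push_cast; ring
    have hc2 : ((M:ℤ)+(i:ℤ)+(n:ℤ)+2 : ℤ) = ((M+i+n+2 : ℕ) : ℤ) := by push_cast; ring
    have hc3 : ((M:ℤ)+(n:ℤ)+2 : ℤ) = ((M+n+2 : ℕ) : ℤ) := by push_cast; ring
    have hc4 : ((i:ℤ)-(n:ℤ)-1 : ℤ) = ((i-(n+1) : ℕ) : ℤ) := by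
      have : (i-(n+1) : ℕ) = i - (n+1) := rfl
      omega
    have hc5 : ((M:ℤ)+2*(n:ℤ)+3 : ℤ) = (M:ℤ) + 2*((n:ℕ)+1 : ℕ) + 1 := by push_cast; ring
    have ha : qNum q ((n:ℤ)+1) ≠ 0 := by rw [hc1]; exact qNum_ne q hq (n+1) (by omega)
    have hb : qNum q ((M:ℤ)+i+n+2) ≠ 0 := by rw [hc2]; exact qNum_ne q hq (M+i+n+2) (by omega)
    have hcn : qNum q ((i:ℤ)-n-1) ≠ 0 := by rw [hc4]; exact qNum_ne q hq (i-(n+1)) (by omega)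
    have hd : qNum q ((M:ℤ)+n+2) ≠ 0 := by rw [hc3]; exact qNum_ne q hq (M+n+2) (by omega)
    have he : qNum q (i:ℤ) ≠ 0 := qNum_ne q hq i (by omega)
    have g1 := qFact_ne q hq (M+n+1)
    have g2 := qFact_ne q hq (M+i+n+1)
    have g3 := qFact_ne q hq (i-(n+2))
    have g4 := qFact_ne q hq n
    rw [hc5] at K
    rw [pow_succ]
    push_cast at K ⊢
    have hB1 : qFact q (M+i+n+1) * (qNum q ((i:ℤ)-n-1) * qFact q (i-(n+2))) * qFact q n * qNum q (i:ℤ) ≠ 0 := by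
      exact mul_ne_zero (mul_ne_zero (mul_ne_zero g2 (mul_ne_zero hcn g3)) g4) he
    have hB2 : qNum q ((n:ℤ)+1) * qFact q n * (qNum q ((i:ℤ)-n-1) * qFact q (i-(n+2))) * (qNum q ((M:ℤ)+i+n+2) * qFact q (M+i+n+1)) ≠ 0 := by
      exact mul_ne_zero (mul_ne_zero (mul_ne_zero ha g4) (mul_ne_zero hcn g3)) (mul_ne_zero hb g2)
    have hB3 : qNum q ((M:ℤ)+i+n+2) * qFact q (M+i+n+1) * qFact q (i-(n+2)) * (qNum q ((n:ℤ)+1) * qFact q n) * qNum q (i:ℤ) ≠ 0 := by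
      exact mul_ne_zero (mul_ne_zero (mul_ne_zero (mul_ne_zero hb g2) g3) (mul_ne_zero ha g4)) he
    rw [mul_div_assoc', mul_div_assoc', mul_div_assoc', div_add_div _ _ hB1 hB2,
      div_eq_div_iff (mul_ne_zero hB1 hB2) hB3]
    linear_combination ((-1:ℂ)^n * qFact q (M+n+1) * qNum q (i:ℤ) * qNum q ((i:ℤ)-n-1) * qNum q ((n:ℤ)+1)
      * qNum q ((M:ℤ)+i+n+2) * (qFact q n)^2 * (qFact q (i-(n+2)))^2 * (qFact q (M+i+n+1))^2) * K


end
end
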